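/- Let G be a (2P_1+P_2, ⋈)-free graph, and let X ⊆ V(G) be such that the subgraph of G induced by X is isomorphic to K_r ⊟ K_r for some r ≥ 5, where X is maximal in the sense that there are no r' > r and S ⊆ V(G)∖X with the subgraph induced by X ∪ S isomorphic to K_{r'} ⊟ K_{r'}. Then there is a branch decomposition of G of mim-width exactly 2; in particular, mimw(G) ≤ 2. -/

import Mathlib

open SimpleGraph

/-- `M` is an induced matching in the bipartite graph `G[X,Y]`: every pair in `M` is an
edge of `G` with first endpoint in `X` and second endpoint in `Y`, the pairs are pairwise
vertex-disjoint, and no edge of `G` between `X` and `Y` joins vertices incident to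
distinct pairs of `M`. -/
def IsInducedCutMatching {V : Type*} (G : SimpleGraph V) (X Y : Set V)
    (M : Finset (V × V)) : Prop :=
  (∀ p ∈ M, p.1 ∈ X ∧ p.2 ∈ Y ∧ G.Adj p.1 p.2) ∧
  ∀ p ∈ M, ∀ q ∈ M, p ≠ q →
    p.1 ≠ q.1 ∧ p.2 ≠ q.2 ∧ p.1 ≠ q.2 ∧ p.2 ≠ q.1 ∧
    ¬ G.Adj p.1 q.2 ∧ ¬ G.Adj q.1 p.2

/-- `cutmim G X Y` is the maximum size of an induced matching in `G[X,Y]`. -/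
noncomputable def cutmim {V : Type*} (G : SimpleGraph V) (X Y : Set V) : ℕ :=
  sSup {n : ℕ | ∃ M : Finset (V × V), IsInducedCutMatching G X Y M ∧ M.card = n}

/-- A branch decomposition of a graph `G`: a finite tree `T` of maximum degree at most 3
together with a bijection `δ` from the vertices of `G` to the leaves of `T`. -/
structure BranchDecomp {V : Type*} (G : SimpleGraph V) where
  L : Type
  T : SimpleGraph L
  finite : Finite L
  connected : T.Connected
  acyclic : T.IsAcyclic
  subcubic : ∀ x : L, (T.neighborSet x).ncard ≤ 3
  δ : V → L
  δ_inj : Function.Injective δ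
  δ_leaf : ∀ v : V, (T.neighborSet (δ v)).ncard = 1
  δ_surj : ∀ x : L, (T.neighborSet x).ncard = 1 → ∃ v : V, δ v = x

/-- The side of the cut of `V(G)` induced by the tree edge `ab`: the set of vertices of
`G` mapped by `δ` into the component of `T - ab` containing `a`. -/
def BranchDecomp.side {V : Type*} {G : SimpleGraph V} (B : BranchDecomp G)
    (a b : B.L) : Set V :=
  {v : V | (B.T.deleteEdges {s(a, b)}).Reachable (B.δ v) a}

/-- The mim-width of a branch decomposition: the maximum over tree edges `ab` of
`cutmim G (A_e, V(G) \ A_e)`. -/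
noncomputable def BranchDecomp.width {V : Type*} {G : SimpleGraph V}
    (B : BranchDecomp G) : ℕ :=
  sSup {n : ℕ | ∃ a b : B.L, B.T.Adj a b ∧ n = cutmim G (B.side a b) (B.side a b)ᶜ}

/-- The mim-width of a graph: the minimum width over all branch decompositions
(by convention `0` if no branch decomposition exists, e.g. for graphs with fewer
than two vertices). -/
noncomputable def mimw {V : Type*} (G : SimpleGraph V) : ℕ :=
  sInf {n : ℕ | ∃ B : BranchDecomp G, B.width = n}

/-- `G` is `H`-free: no induced subgraph of `G` is isomorphic to `H`. -/
def HFree {V W : Type*} (G : SimpleGraph V) (H : SimpleGraph W) : Prop :=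
  ¬ ∃ S : Set V, Nonempty ((G.induce S) ≃g H)

/-- The disjoint union of two graphs. -/
def sumGraph {α β : Type*} (G : SimpleGraph α) (H : SimpleGraph β) :
    SimpleGraph (α ⊕ β) :=
  SimpleGraph.fromRel (fun a b =>
    (∃ x y, a = Sum.inl x ∧ b = Sum.inl y ∧ G.Adj x y) ∨
    (∃ x y, a = Sum.inr x ∧ b = Sum.inr y ∧ H.Adj x y))

/-- `tP₂`: the disjoint union of `t` single edges. -/
def tP2graph (t : ℕ) : SimpleGraph (Fin t × Fin 2) :=
  SimpleGraph.fromRel (fun a b => a.1 = b.1)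

/-- `sP₁ + P₂`: `s` isolated vertices together with a single edge. -/
def sP1P2graph (s : ℕ) : SimpleGraph (Fin s ⊕ Fin 2) :=
  SimpleGraph.fromRel (fun a b => ∃ i j : Fin 2, a = Sum.inr i ∧ b = Sum.inr j)

/-- `K_r ⊟ K_r`: two disjoint copies of `K_r` joined by a perfect matching. -/
def KboxK (r : ℕ) : SimpleGraph (Fin r ⊕ Fin r) :=
  SimpleGraph.fromRel (fun a b =>
    (∃ i j, a = Sum.inl i ∧ b = Sum.inl j) ∨
    (∃ i j, a = Sum.inr i ∧ b = Sum.inr j) ∨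
    (∃ i, a = Sum.inl i ∧ b = Sum.inr i))

/-- `K_r ⊟ rP₁`: a clique `a_1, …, a_r`, an independent set `b_1, …, b_r`, and the
matching edges `a_i b_i`. -/
def KboxI (r : ℕ) : SimpleGraph (Fin r ⊕ Fin r) :=
  SimpleGraph.fromRel (fun a b =>
    (∃ i j, a = Sum.inl i ∧ b = Sum.inl j) ∨
    (∃ i, a = Sum.inl i ∧ b = Sum.inr i))

/-- `K_r ⊟ P₁`: `K_r` plus a pendant vertex attached to exactly one vertex of `K_r`. -/
def KboxP1 (r : ℕ) : SimpleGraph (Fin r ⊕ Unit) :=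
  SimpleGraph.fromRel (fun a b =>
    (∃ i j : Fin r, a = Sum.inl i ∧ b = Sum.inl j) ∨
    (∃ i : Fin r, i.val = 0 ∧ a = Sum.inl i ∧ b = Sum.inr ()))

/-- The claw `K_{1,3}`: vertex `0` adjacent to the three leaves `1`, `2`, `3`. -/
def clawGraph : SimpleGraph (Fin 4) :=
  SimpleGraph.fromRel (fun a _ => a = 0)

/-- The diamond: `K_4` minus the edge `{2,3}`. -/
def diamondGraph : SimpleGraph (Fin 4) :=
  SimpleGraph.fromRel (fun a b => ¬(a = 2 ∧ b = 3) ∧ ¬(a = 3 ∧ b = 2))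

/-- The bowtie `⋈`: two triangles `{0,1,2}` and `{0,3,4}` sharing the vertex `0`. -/
def bowtieGraph : SimpleGraph (Fin 5) :=
  SimpleGraph.fromRel (fun a b => a = 0 ∨ (a = 1 ∧ b = 2) ∨ (a = 3 ∧ b = 4))

/-- `P₁ + 2P₂`: the isolated vertex `0` and the two disjoint edges `12` and `34`. -/
def P1plus2P2graph : SimpleGraph (Fin 5) :=
  SimpleGraph.fromRel (fun a b => (a = 1 ∧ b = 2) ∨ (a = 3 ∧ b = 4))

/-- The subdivided claw `S_{1,1,5}`: centre `0` with leaves `1`, `2` at distance one and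
the path `0-3-4-5-6-7`. -/
def S115graph : SimpleGraph (Fin 8) :=
  SimpleGraph.fromRel (fun a b =>
    (a = 0 ∧ b = 1) ∨ (a = 0 ∧ b = 2) ∨ (a = 0 ∧ b = 3) ∨
    (a = 3 ∧ b = 4) ∨ (a = 4 ∧ b = 5) ∨ (a = 5 ∧ b = 6) ∨ (a = 6 ∧ b = 7))

/-- The Ramsey number `R(a,b)`: the least `N` such that every graph on at least `N`
vertices contains a clique of size `a` or an independent set of size `b`. -/
noncomputable def ramsey (a b : ℕ) : ℕ :=
  sInf {N : ℕ | ∀ M : ℕ, N ≤ M → ∀ G : SimpleGraph (Fin M),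
    (∃ s : Finset (Fin M), G.IsNClique a s) ∨ (∃ s : Finset (Fin M), Gᶜ.IsNClique b s)}

/-- The `h × 2r` grid with the vertical edges prescribed by the wall construction:
the vertical edge between rows `i` and `i+1` of column `j` (all `0`-indexed) is kept
exactly when `i ≡ j (mod 2)`. -/
def wallPre (h r : ℕ) : SimpleGraph (Fin h × Fin (2 * r)) :=
  SimpleGraph.fromRel (fun a b =>
    (a.1 = b.1 ∧ (a.2 : ℕ) + 1 = (b.2 : ℕ)) ∨
    (a.2 = b.2 ∧ (a.1 : ℕ) + 1 = (b.1 : ℕ) ∧ (a.1 : ℕ) % 2 = (a.2 : ℕ) % 2))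

/-- The elementary `(h × r)`-wall: delete from `wallPre h r` all vertices of degree 1. -/
def elementaryWall (h r : ℕ) :
    SimpleGraph {v : Fin h × Fin (2 * r) // ((wallPre h r).neighborSet v).ncard ≠ 1} :=
  (wallPre h r).induce {v | ((wallPre h r).neighborSet v).ncard ≠ 1}

/-- The graph obtained from `W` by simultaneously performing a clique implant on every
vertex of degree `3`: a degree-3 vertex `v` is replaced by the triangle of vertices
`(v, some u)` for `u` a neighbour of `v`, and `(v, some u)` inherits the edge of `v`
towards `u`; vertices of degree `≠ 3` are kept as `(v, none)`. -/
def cliqueImplantAll {V : Type*} (W : SimpleGraph V) :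
    SimpleGraph {p : V × Option V //
      (p.2 = none ∧ (W.neighborSet p.1).ncard ≠ 3) ∨
      (∃ u, p.2 = some u ∧ (W.neighborSet p.1).ncard = 3 ∧ W.Adj p.1 u)} :=
  SimpleGraph.fromRel (fun a b =>
    (a.1.1 = b.1.1 ∧ a.1.2 ≠ b.1.2) ∨
    (W.Adj a.1.1 b.1.1 ∧ (a.1.2 = none ∨ a.1.2 = some b.1.1) ∧
      (b.1.2 = none ∨ b.1.2 = some a.1.1)))

/-- A net-wall: the graph obtained from the elementary `(n × n)`-wall by performing a
clique implant on every vertex of degree `3`. -/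
def netWall (n : ℕ) := cliqueImplantAll (elementaryWall n n)

/-- The chordal bipartite graph `G'` of Brault-Baron, Capelli and Mengel, built from a
graph `G`: vertices `x_v` (`Sum.inl v`), `y_v` (`Sum.inr (Sum.inl v)`), and for every
ordered adjacent pair `p = (u,v)` two vertices `q_p = (p,0)` and `t_p = (p,1)`;
`X` is complete to `Y`, and for each adjacent pair `(u,v)` there is a path
`x_u - q_{(u,v)} - t_{(u,v)} - y_v`. -/
def BCMgraph {V : Type*} (G : SimpleGraph V) :
    SimpleGraph (V ⊕ V ⊕ ({p : V × V // G.Adj p.1 p.2} × Fin 2)) :=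
  SimpleGraph.fromRel (fun a b =>
    (∃ u w : V, a = Sum.inl u ∧ b = Sum.inr (Sum.inl w)) ∨
    (∃ p : {p : V × V // G.Adj p.1 p.2},
      a = Sum.inl p.1.1 ∧ b = Sum.inr (Sum.inr (p, 0))) ∨
    (∃ p : {p : V × V // G.Adj p.1 p.2},
      a = Sum.inr (Sum.inr (p, 0)) ∧ b = Sum.inr (Sum.inr (p, 1))) ∨
    (∃ p : {p : V × V // G.Adj p.1 p.2},
      a = Sum.inr (Sum.inr (p, 1)) ∧ b = Sum.inr (Sum.inl p.1.2)))



section Aux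

section Generic
variable {V : Type*} {G : SimpleGraph V} {X Y : Set V}

lemma reach_invariant {L : Type*} {H : SimpleGraph L} (π : L → Prop)
    (h : ∀ x y, H.Adj x y → (π x ↔ π y)) {x y : L} (hr : H.Reachable x y) : π x ↔ π y := by
  obtain ⟨w⟩ := hr
  induction w with
  | nil => rfl
  | cons ha _ ih => exact (h _ _ ha).trans ih

lemma empty_icm : IsInducedCutMatching G X Y (∅ : Finset (V × V)) := by
  constructor
  · intro p hp; simp at hp
  · intro p hp; simp at hp

lemma cutmim_le {m : ℕ} (h : ∀ M, IsInducedCutMatching G X Y M → M.card ≤ m) :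
    cutmim G X Y ≤ m := by
  refine csSup_le ⟨0, ∅, empty_icm, rfl⟩ ?_
  rintro n ⟨M, hM, rfl⟩
  exact h M hM

lemma le_cutmim [Finite V] {M : Finset (V × V)} (h : IsInducedCutMatching G X Y M) :
    M.card ≤ cutmim G X Y := by
  have : Fintype V := Fintype.ofFinite V
  refine le_csSup ⟨Fintype.card (V × V), ?_⟩ ⟨M, h, rfl⟩
  rintro n ⟨N, _, rfl⟩
  exact Finset.card_le_univ N

lemma IsInducedCutMatching.swap (h : IsInducedCutMatching G X Y M) :
    IsInducedCutMatching G Y X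
      (M.map ⟨Prod.swap, fun a b => by simp [Prod.ext_iff]; tauto⟩) := by
  obtain ⟨h1, h2⟩ := h
  constructor
  · rintro p hp
    simp only [Finset.mem_map, Function.Embedding.coeFn_mk] at hp
    obtain ⟨q, hq, rfl⟩ := hp
    obtain ⟨ha, hb, hc⟩ := h1 q hq
    exact ⟨hb, ha, hc.symm⟩
  · rintro p hp q hq hpq
    simp only [Finset.mem_map, Function.Embedding.coeFn_mk] at hp hq
    obtain ⟨p', hp', rfl⟩ := hp
    obtain ⟨q', hq', rfl⟩ := hq
    have hne : p' ≠ q' := by rintro rfl; exact hpq rfl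
    obtain ⟨a, b, c, d, e, f⟩ := h2 p' hp' q' hq' hne
    refine ⟨fun h => b h, fun h => a h, fun h => d h, fun h => c h,
      fun hadj => f hadj.symm, fun hadj => e hadj.symm⟩

lemma cutmim_swap : cutmim G Y X = cutmim G X Y := by
  have key : ∀ (X Y : Set V) (n : ℕ),
      (∃ M, IsInducedCutMatching G X Y M ∧ M.card = n) →
      (∃ M, IsInducedCutMatching G Y X M ∧ M.card = n) := by
    rintro X Y n ⟨M, hM, rfl⟩
    exact ⟨_, hM.swap, Finset.card_map _⟩
  unfold cutmim
  congr 1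
  ext n
  exact ⟨key Y X n, key X Y n⟩

lemma icm_card_le_one_left {x : V} {M : Finset (V × V)}
    (h : IsInducedCutMatching G {x} Y M) : M.card ≤ 1 := by
  refine Finset.card_le_one.2 fun p hp q hq => ?_
  by_contra hne
  have h1 := (h.1 p hp).1
  have h2 := (h.1 q hq).1
  simp only [Set.mem_singleton_iff] at h1 h2
  exact (h.2 p hp q hq hne).1 (h1.trans h2.symm)


lemma cutmim_left_sub (h : ∀ x ∈ X, ∀ y ∈ X, x = y) : cutmim G X Y ≤ 1 := by
  apply cutmim_le
  intro M hM
  refine Finset.card_le_one.2 fun p hp q hq => ?_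
  by_contra hne'
  exact (hM.2 p hp q hq hne').1 (h _ (hM.1 p hp).1 _ (hM.1 q hq).1)

lemma cutmim_right_sub (h : ∀ x ∈ Y, ∀ y ∈ Y, x = y) : cutmim G X Y ≤ 1 := by
  apply cutmim_le
  intro M hM
  refine Finset.card_le_one.2 fun p hp q hq => ?_
  by_contra hne'
  exact (hM.2 p hp q hq hne').2.1 (h _ (hM.1 p hp).2.1 _ (hM.1 q hq).2.1)

end Generic

section Helpers
variable {V : Type*} {G : SimpleGraph V}

lemma no2P1P2 (h1 : HFree G (sP1P2graph 2)) {u w x y : V}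
    (huw' : u ≠ w) (hxy : G.Adj x y) (huw : ¬G.Adj u w) (hux : ¬G.Adj u x)
    (huy : ¬G.Adj u y) (hwx : ¬G.Adj w x) (hwy : ¬G.Adj w y) : False := by
  classical
  have hux' : u ≠ x := by rintro rfl; exact huy hxy
  have huy' : u ≠ y := by rintro rfl; exact hux hxy.symm
  have hwx' : w ≠ x := by rintro rfl; exact hwy hxy
  have hwy' : w ≠ y := by rintro rfl; exact hwx hxy.symm
  have hxy' : x ≠ y := hxy.ne
  apply h1
  refine ⟨{u, w, x, y}, ⟨?_⟩⟩
  have mem : ∀ v : ({u, w, x, y} : Set V), v.1 = u ∨ v.1 = w ∨ v.1 = x ∨ v.1 = y := by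
    rintro ⟨v, hv⟩; simpa using hv
  let f : ({u, w, x, y} : Set V) → Fin 2 ⊕ Fin 2 := fun v =>
    if v.1 = u then Sum.inl 0 else if v.1 = w then Sum.inl 1 else
    if v.1 = x then Sum.inr 0 else Sum.inr 1
  have hfu : ∀ v : ({u, w, x, y} : Set V), v.1 = u → f v = Sum.inl 0 := by
    intro v hv; simp [f, hv]
  have hfw : ∀ v : ({u, w, x, y} : Set V), v.1 = w → f v = Sum.inl 1 := by
    intro v hv; simp [f, hv, huw'.symm]
  have hfx : ∀ v : ({u, w, x, y} : Set V), v.1 = x → f v = Sum.inr 0 := by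
    intro v hv; simp [f, hv, hux'.symm, hwx'.symm]
  have hfy : ∀ v : ({u, w, x, y} : Set V), v.1 = y → f v = Sum.inr 1 := by
    intro v hv; simp [f, hv, huy'.symm, hwy'.symm, hxy'.symm]
  let g : Fin 2 ⊕ Fin 2 → V := Sum.elim ![u, w] ![x, y]
  have hgf : ∀ v : ({u, w, x, y} : Set V), g (f v) = v.1 := by
    intro v
    rcases mem v with h | h | h | h
    · rw [hfu v h, h]; rfl
    · rw [hfw v h, h]; rfl
    · rw [hfx v h, h]; rfl
    · rw [hfy v h, h]; rfl
  have hbij : Function.Bijective f := by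
    constructor
    · intro a b hab
      have := (hgf a).symm.trans (congrArg g hab) |>.trans (hgf b)
      exact Subtype.ext this
    · intro z
      rcases z with i | i <;> fin_cases i
      · exact ⟨⟨u, by simp⟩, hfu _ rfl⟩
      · exact ⟨⟨w, by simp⟩, hfw _ rfl⟩
      · exact ⟨⟨x, by simp⟩, hfx _ rfl⟩
      · exact ⟨⟨y, by simp⟩, hfy _ rfl⟩
  refine ⟨Equiv.ofBijective f hbij, ?_⟩
  rintro a b
  show (sP1P2graph 2).Adj (f a) (f b) ↔ G.Adj a.1 b.1
  rcases mem a with ha | ha | ha | ha <;> rcases mem b with hb | hb | hb | hb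
  · rw [hfu a ha, hfu b hb, ha, hb]
    exact iff_of_false (by rw [sP1P2graph, fromRel_adj]; decide) (G.irrefl)
  · rw [hfu a ha, hfw b hb, ha, hb]
    exact iff_of_false (by rw [sP1P2graph, fromRel_adj]; decide) (huw)
  · rw [hfu a ha, hfx b hb, ha, hb]
    exact iff_of_false (by rw [sP1P2graph, fromRel_adj]; decide) (hux)
  · rw [hfu a ha, hfy b hb, ha, hb]
    exact iff_of_false (by rw [sP1P2graph, fromRel_adj]; decide) (huy)
  · rw [hfw a ha, hfu b hb, ha, hb]
    exact iff_of_false (by rw [sP1P2graph, fromRel_adj]; decide) (fun h => huw h.symm)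
  · rw [hfw a ha, hfw b hb, ha, hb]
    exact iff_of_false (by rw [sP1P2graph, fromRel_adj]; decide) (G.irrefl)
  · rw [hfw a ha, hfx b hb, ha, hb]
    exact iff_of_false (by rw [sP1P2graph, fromRel_adj]; decide) (hwx)
  · rw [hfw a ha, hfy b hb, ha, hb]
    exact iff_of_false (by rw [sP1P2graph, fromRel_adj]; decide) (hwy)
  · rw [hfx a ha, hfu b hb, ha, hb]
    exact iff_of_false (by rw [sP1P2graph, fromRel_adj]; decide) (fun h => hux h.symm)
  · rw [hfx a ha, hfw b hb, ha, hb]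
    exact iff_of_false (by rw [sP1P2graph, fromRel_adj]; decide) (fun h => hwx h.symm)
  · rw [hfx a ha, hfx b hb, ha, hb]
    exact iff_of_false (by rw [sP1P2graph, fromRel_adj]; decide) (G.irrefl)
  · rw [hfx a ha, hfy b hb, ha, hb]
    exact iff_of_true (by rw [sP1P2graph, fromRel_adj]; decide) (hxy)
  · rw [hfy a ha, hfu b hb, ha, hb]
    exact iff_of_false (by rw [sP1P2graph, fromRel_adj]; decide) (fun h => huy h.symm)
  · rw [hfy a ha, hfw b hb, ha, hb]
    exact iff_of_false (by rw [sP1P2graph, fromRel_adj]; decide) (fun h => hwy h.symm)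
  · rw [hfy a ha, hfx b hb, ha, hb]
    exact iff_of_true (by rw [sP1P2graph, fromRel_adj]; decide) (hxy.symm)
  · rw [hfy a ha, hfy b hb, ha, hb]
    exact iff_of_false (by rw [sP1P2graph, fromRel_adj]; decide) (G.irrefl)

lemma noBowtie (h2 : HFree G bowtieGraph) {c x y u w : V}
    (hcx : G.Adj c x) (hcy : G.Adj c y) (hcu : G.Adj c u) (hcw : G.Adj c w)
    (hxy : G.Adj x y) (huw : G.Adj u w)
    (hxu : ¬G.Adj x u) (hxw : ¬G.Adj x w) (hyu : ¬G.Adj y u) (hyw : ¬G.Adj y w) : False := by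
  classical
  have hcx' : c ≠ x := hcx.ne
  have hcy' : c ≠ y := hcy.ne
  have hcu' : c ≠ u := hcu.ne
  have hcw' : c ≠ w := hcw.ne
  have hxy' : x ≠ y := hxy.ne
  have huw' : u ≠ w := huw.ne
  have hxu' : x ≠ u := by rintro rfl; exact hxw huw
  have hxw' : x ≠ w := by rintro rfl; exact hxu huw.symm
  have hyu' : y ≠ u := by rintro rfl; exact hyw huw
  have hyw' : y ≠ w := by rintro rfl; exact hyu huw.symm
  apply h2
  refine ⟨{c, x, y, u, w}, ⟨?_⟩⟩
  have mem : ∀ v : ({c, x, y, u, w} : Set V),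
      v.1 = c ∨ v.1 = x ∨ v.1 = y ∨ v.1 = u ∨ v.1 = w := by
    rintro ⟨v, hv⟩; simpa using hv
  let f : ({c, x, y, u, w} : Set V) → Fin 5 := fun v =>
    if v.1 = c then 0 else if v.1 = x then 1 else if v.1 = y then 2 else
    if v.1 = u then 3 else 4
  have hf0 : ∀ v : ({c, x, y, u, w} : Set V), v.1 = c → f v = 0 := by
    intro v hv; simp [f, hv]
  have hf1 : ∀ v : ({c, x, y, u, w} : Set V), v.1 = x → f v = 1 := by
    intro v hv; simp [f, hv, hcx'.symm]
  have hf2 : ∀ v : ({c, x, y, u, w} : Set V), v.1 = y → f v = 2 := by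
    intro v hv; simp [f, hv, hcy'.symm, hxy'.symm]
  have hf3 : ∀ v : ({c, x, y, u, w} : Set V), v.1 = u → f v = 3 := by
    intro v hv; simp [f, hv, hcu'.symm, hxu'.symm, hyu'.symm]
  have hf4 : ∀ v : ({c, x, y, u, w} : Set V), v.1 = w → f v = 4 := by
    intro v hv; simp [f, hv, hcw'.symm, hxw'.symm, hyw'.symm, huw'.symm]
  let g : Fin 5 → V := ![c, x, y, u, w]
  have hgf : ∀ v : ({c, x, y, u, w} : Set V), g (f v) = v.1 := by
    intro v
    rcases mem v with h | h | h | h | h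
    · rw [hf0 v h, h]; rfl
    · rw [hf1 v h, h]; rfl
    · rw [hf2 v h, h]; rfl
    · rw [hf3 v h, h]; rfl
    · rw [hf4 v h, h]; rfl
  have hbij : Function.Bijective f := by
    constructor
    · intro a b hab
      have := (hgf a).symm.trans (congrArg g hab) |>.trans (hgf b)
      exact Subtype.ext this
    · intro z
      fin_cases z
      · exact ⟨⟨c, by simp⟩, hf0 _ rfl⟩
      · exact ⟨⟨x, by simp⟩, hf1 _ rfl⟩
      · exact ⟨⟨y, by simp⟩, hf2 _ rfl⟩
      · exact ⟨⟨u, by simp⟩, hf3 _ rfl⟩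
      · exact ⟨⟨w, by simp⟩, hf4 _ rfl⟩
  refine ⟨Equiv.ofBijective f hbij, ?_⟩
  rintro a b
  show bowtieGraph.Adj (f a) (f b) ↔ G.Adj a.1 b.1
  rcases mem a with ha | ha | ha | ha | ha <;> rcases mem b with hb | hb | hb | hb | hb
  · rw [hf0 a ha, hf0 b hb, ha, hb]
    exact iff_of_false (by rw [bowtieGraph, fromRel_adj]; decide) (G.irrefl)
  · rw [hf0 a ha, hf1 b hb, ha, hb]
    exact iff_of_true (by rw [bowtieGraph, fromRel_adj]; decide) (hcx)
  · rw [hf0 a ha, hf2 b hb, ha, hb]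
    exact iff_of_true (by rw [bowtieGraph, fromRel_adj]; decide) (hcy)
  · rw [hf0 a ha, hf3 b hb, ha, hb]
    exact iff_of_true (by rw [bowtieGraph, fromRel_adj]; decide) (hcu)
  · rw [hf0 a ha, hf4 b hb, ha, hb]
    exact iff_of_true (by rw [bowtieGraph, fromRel_adj]; decide) (hcw)
  · rw [hf1 a ha, hf0 b hb, ha, hb]
    exact iff_of_true (by rw [bowtieGraph, fromRel_adj]; decide) (hcx.symm)
  · rw [hf1 a ha, hf1 b hb, ha, hb]
    exact iff_of_false (by rw [bowtieGraph, fromRel_adj]; decide) (G.irrefl)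
  · rw [hf1 a ha, hf2 b hb, ha, hb]
    exact iff_of_true (by rw [bowtieGraph, fromRel_adj]; decide) (hxy)
  · rw [hf1 a ha, hf3 b hb, ha, hb]
    exact iff_of_false (by rw [bowtieGraph, fromRel_adj]; decide) (hxu)
  · rw [hf1 a ha, hf4 b hb, ha, hb]
    exact iff_of_false (by rw [bowtieGraph, fromRel_adj]; decide) (hxw)
  · rw [hf2 a ha, hf0 b hb, ha, hb]
    exact iff_of_true (by rw [bowtieGraph, fromRel_adj]; decide) (hcy.symm)
  · rw [hf2 a ha, hf1 b hb, ha, hb]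
    exact iff_of_true (by rw [bowtieGraph, fromRel_adj]; decide) (hxy.symm)
  · rw [hf2 a ha, hf2 b hb, ha, hb]
    exact iff_of_false (by rw [bowtieGraph, fromRel_adj]; decide) (G.irrefl)
  · rw [hf2 a ha, hf3 b hb, ha, hb]
    exact iff_of_false (by rw [bowtieGraph, fromRel_adj]; decide) (hyu)
  · rw [hf2 a ha, hf4 b hb, ha, hb]
    exact iff_of_false (by rw [bowtieGraph, fromRel_adj]; decide) (hyw)
  · rw [hf3 a ha, hf0 b hb, ha, hb]
    exact iff_of_true (by rw [bowtieGraph, fromRel_adj]; decide) (hcu.symm)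
  · rw [hf3 a ha, hf1 b hb, ha, hb]
    exact iff_of_false (by rw [bowtieGraph, fromRel_adj]; decide) (fun h => hxu h.symm)
  · rw [hf3 a ha, hf2 b hb, ha, hb]
    exact iff_of_false (by rw [bowtieGraph, fromRel_adj]; decide) (fun h => hyu h.symm)
  · rw [hf3 a ha, hf3 b hb, ha, hb]
    exact iff_of_false (by rw [bowtieGraph, fromRel_adj]; decide) (G.irrefl)
  · rw [hf3 a ha, hf4 b hb, ha, hb]
    exact iff_of_true (by rw [bowtieGraph, fromRel_adj]; decide) (huw)
  · rw [hf4 a ha, hf0 b hb, ha, hb]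
    exact iff_of_true (by rw [bowtieGraph, fromRel_adj]; decide) (hcw.symm)
  · rw [hf4 a ha, hf1 b hb, ha, hb]
    exact iff_of_false (by rw [bowtieGraph, fromRel_adj]; decide) (fun h => hxw h.symm)
  · rw [hf4 a ha, hf2 b hb, ha, hb]
    exact iff_of_false (by rw [bowtieGraph, fromRel_adj]; decide) (fun h => hyw h.symm)
  · rw [hf4 a ha, hf3 b hb, ha, hb]
    exact iff_of_true (by rw [bowtieGraph, fromRel_adj]; decide) (huw.symm)
  · rw [hf4 a ha, hf4 b hb, ha, hb]
    exact iff_of_false (by rw [bowtieGraph, fromRel_adj]; decide) (G.irrefl)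

end Helpers

lemma kbox_ll {r : ℕ} (i j : Fin r) : (KboxK r).Adj (Sum.inl i) (Sum.inl j) ↔ i ≠ j := by
  rw [KboxK, fromRel_adj]; simp

lemma kbox_rr {r : ℕ} (i j : Fin r) : (KboxK r).Adj (Sum.inr i) (Sum.inr j) ↔ i ≠ j := by
  rw [KboxK, fromRel_adj]; simp

lemma kbox_lr {r : ℕ} (i j : Fin r) : (KboxK r).Adj (Sum.inl i) (Sum.inr j) ↔ i = j := by
  rw [KboxK, fromRel_adj]
  constructor
  · rintro ⟨h, hc⟩
    rcases hc with (⟨a,c,h1,h2⟩|⟨a,c,h1,h2⟩|⟨a,h1,h2⟩)|(⟨a,c,h1,h2⟩|⟨a,c,h1,h2⟩|⟨a,h1,h2⟩) <;>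
      simp_all
  · rintro rfl
    exact ⟨by simp, Or.inl (Or.inr (Or.inr ⟨i, rfl, rfl⟩))⟩

lemma kbox_rl {r : ℕ} (i j : Fin r) : (KboxK r).Adj (Sum.inr i) (Sum.inl j) ↔ i = j := by
  rw [adj_comm, kbox_lr]; exact eq_comm



section Pick
variable {r : ℕ}

lemma pick1 (s : Finset (Fin r)) (h : s.card + 1 ≤ r) : ∃ i, i ∉ s := by
  have hc : 0 < sᶜ.card := by
    rw [Finset.card_compl, Fintype.card_fin]; omega
  obtain ⟨i, hi⟩ := Finset.card_pos.mp hc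
  exact ⟨i, by simpa using hi⟩

lemma pick3 (s : Finset (Fin r)) (h : s.card + 3 ≤ r) :
    ∃ i j k, i ≠ j ∧ i ≠ k ∧ j ≠ k ∧ i ∉ s ∧ j ∉ s ∧ k ∉ s := by
  have hc : 2 < sᶜ.card := by
    rw [Finset.card_compl, Fintype.card_fin]; omega
  obtain ⟨i, j, k, hi, hj, hk, hij, hik, hjk⟩ := Finset.two_lt_card_iff.mp hc
  exact ⟨i, j, k, hij, hik, hjk, by simpa using hi, by simpa using hj, by simpa using hk⟩

lemma card_pair_le (s t : Fin r) : ({s, t} : Finset (Fin r)).card ≤ 2 := by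
  have := Finset.card_insert_le s ({t} : Finset (Fin r))
  simp only [Finset.card_singleton] at this
  omega

/-- Among sufficiently many indices avoiding `avoid`, two satisfy `P`, provided the
non-`P` indices form a subsingleton. -/
lemma pick2P (P : Fin r → Prop) (hsub : ∀ k l, ¬P k → ¬P l → k = l)
    (avoid : Finset (Fin r)) (h : avoid.card + 3 ≤ r) :
    ∃ i j, i ≠ j ∧ i ∉ avoid ∧ j ∉ avoid ∧ P i ∧ P j := by
  classical
  obtain ⟨i, j, k, hij, hik, hjk, hi, hj, hk⟩ := pick3 avoid h
  by_cases hPi : P i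
  · by_cases hPj : P j
    · exact ⟨i, j, hij, hi, hj, hPi, hPj⟩
    · have hPk : P k := by by_contra hPk; exact hjk (hsub j k hPj hPk)
      exact ⟨i, k, hik, hi, hk, hPi, hPk⟩
  · have hPj : P j := by by_contra hPj; exact hij (hsub i j hPi hPj)
    have hPk : P k := by by_contra hPk; exact hik (hsub i k hPi hPk)
    exact ⟨j, k, hjk, hj, hk, hPj, hPk⟩
end Pick

section Structure
variable {V : Type*} {G : SimpleGraph V}
  (h1 : HFree G (sP1P2graph 2)) (h2 : HFree G bowtieGraph)
  {r : ℕ} (hr : 5 ≤ r) {X : Set V} {a b : Fin r → V}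
  (haX : ∀ i, a i ∈ X) (hbX : ∀ i, b i ∈ X)
  (hne : ∀ i j, a i ≠ b j)
  (haa : ∀ i j, G.Adj (a i) (a j) ↔ i ≠ j)
  (hbb : ∀ i j, G.Adj (b i) (b j) ↔ i ≠ j)
  (hab : ∀ i j, G.Adj (a i) (b j) ↔ i = j)

include h1 h2 hr haX hbX hne haa hbb hab

/-- Two `a`-neighbours and two `b`-neighbours with disjoint indices give a bowtie. -/
lemma bowtieV {v : V} {s t i j : Fin r}
    (hst : s ≠ t) (hij : i ≠ j) (his : i ≠ s) (hit : i ≠ t) (hjs : j ≠ s) (hjt : j ≠ t)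
    (has : G.Adj v (a s)) (hat : G.Adj v (a t)) (hbi : G.Adj v (b i)) (hbj : G.Adj v (b j)) :
    False := by
  refine noBowtie h2 (c := v) (x := a s) (y := a t) (u := b i) (w := b j)
    has hat hbi hbj ((haa s t).2 hst) ((hbb i j).2 hij) ?_ ?_ ?_ ?_
  · exact fun h => his ((hab s i).1 h).symm
  · exact fun h => hjs ((hab s j).1 h).symm
  · exact fun h => hit ((hab t i).1 h).symm
  · exact fun h => hjt ((hab t j).1 h).symm

/-- Missing two `a`s forces adjacency to most `b`s. -/
lemma missA_adjB {v : V} (hv : v ∉ X) {s t : Fin r} (hst : s ≠ t)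
    (hs : ¬G.Adj v (a s)) (ht : ¬G.Adj v (a t)) {k : Fin r} (hks : k ≠ s) (hkt : k ≠ t) :
    G.Adj v (b k) := by
  by_contra hk
  refine no2P1P2 h1 (u := v) (w := b k) (x := a s) (y := a t)
    (fun h => hv (h ▸ hbX k)) ((haa s t).2 hst) hk hs ht ?_ ?_
  · exact fun h => hks ((hab s k).1 h.symm).symm
  · exact fun h => hkt ((hab t k).1 h.symm).symm

/-- Missing two `b`s forces adjacency to most `a`s. -/
lemma missB_adjA {v : V} (hv : v ∉ X) {s t : Fin r} (hst : s ≠ t)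
    (hs : ¬G.Adj v (b s)) (ht : ¬G.Adj v (b t)) {k : Fin r} (hks : k ≠ s) (hkt : k ≠ t) :
    G.Adj v (a k) := by
  by_contra hk
  refine no2P1P2 h1 (u := v) (w := a k) (x := b s) (y := b t)
    (fun h => hv (h ▸ haX k)) ((hbb s t).2 hst) hk hs ht ?_ ?_
  · exact fun h => hks ((hab k s).1 h)
  · exact fun h => hkt ((hab k t).1 h)

/-- Classification of vertices outside `X`. -/
lemma classify {v : V} (hv : v ∉ X) :
    ((∀ i, G.Adj v (b i)) ∧ (∀ s t, G.Adj v (a s) → G.Adj v (a t) → s = t)) ∨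
    ((∀ i, G.Adj v (a i)) ∧ (∀ s t, G.Adj v (b s) → G.Adj v (b t) → s = t)) := by
  classical
  by_cases hA : ∃ s t, s ≠ t ∧ ¬G.Adj v (a s) ∧ ¬G.Adj v (a t)
  · by_cases hB : ∃ s t, s ≠ t ∧ ¬G.Adj v (b s) ∧ ¬G.Adj v (b t)
    · -- type 2: contradiction via bowtie centred at b i
      exfalso
      obtain ⟨s, t, hst, has, hat⟩ := hA
      obtain ⟨s', t', hst', hbs, hbt⟩ := hB
      have hbmem : ∀ k, ¬G.Adj v (b k) → (k = s ∨ k = t) := by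
        intro k hk
        by_contra hcon
        push_neg at hcon
        exact hk (missA_adjB h1 h2 hr haX hbX hne haa hbb hab hv hst has hat hcon.1 hcon.2)
      have hamem : ∀ k, ¬G.Adj v (a k) → (k = s' ∨ k = t') := by
        intro k hk
        by_contra hcon
        push_neg at hcon
        exact hk (missB_adjA h1 h2 hr haX hbX hne haa hbb hab hv hst' hbs hbt hcon.1 hcon.2)
      have hbsBoth : ¬G.Adj v (b s) ∧ ¬G.Adj v (b t) := by
        rcases hbmem s' hbs with h | h <;> rcases hbmem t' hbt with h' | h'
        · exact absurd (h.trans h'.symm) hst'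
        · exact ⟨h ▸ hbs, h' ▸ hbt⟩
        · exact ⟨h' ▸ hbt, h ▸ hbs⟩
        · exact absurd (h.trans h'.symm) hst'
      have hamem' : ∀ k, ¬G.Adj v (a k) → (k = s ∨ k = t) := by
        intro k hk
        rcases hamem k hk with rfl | rfl
        · rcases hamem s has with h | h
          · exact Or.inl h.symm
          · rcases hamem t hat with h' | h'
            · exact Or.inr h'.symm
            · exact absurd (h'.trans h.symm).symm hst
        · rcases hamem s has with h | h
          · rcases hamem t hat with h' | h'
            · exact absurd (h.trans h'.symm) hst
            · exact Or.inr h'.symm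
          · exact Or.inl h.symm
      obtain ⟨i, hi⟩ := pick1 {s, t} (by have := card_pair_le s t; omega)
      simp only [Finset.mem_insert, Finset.mem_singleton] at hi
      push_neg at hi
      have hvai : G.Adj v (a i) := by
        by_contra hcon
        rcases hamem' i hcon with h | h
        · exact hi.1 h
        · exact hi.2 h
      have hvbi : G.Adj v (b i) :=
        missA_adjB h1 h2 hr haX hbX hne haa hbb hab hv hst has hat hi.1 hi.2
      refine noBowtie h2 (c := b i) (x := v) (y := a i) (u := b s) (w := b t)
        hvbi.symm ((hab i i).2 rfl).symm ((hbb i s).2 hi.1) ((hbb i t).2 hi.2)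
        hvai ((hbb s t).2 hst) hbsBoth.1 hbsBoth.2 ?_ ?_
      · exact fun h => hi.1 ((hab i s).1 h)
      · exact fun h => hi.2 ((hab i t).1 h)
    · -- misses ≥ 2 a's, at most one missed b : left disjunct
      push_neg at hB
      left
      obtain ⟨s, t, hst, has, hat⟩ := hA
      have hsubB : ∀ k l, ¬G.Adj v (b k) → ¬G.Adj v (b l) → k = l := by
        intro k l hk hl
        by_contra hkl
        exact hl (hB k l hkl hk)
      have hAone : ∀ s' t', G.Adj v (a s') → G.Adj v (a t') → s' = t' := by
        intro s' t' has' hat'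
        by_contra hst'
        obtain ⟨i, j, hij, hi, hj, hPi, hPj⟩ :=
          pick2P (fun k => G.Adj v (b k)) hsubB {s', t'}
            (by have := card_pair_le s' t'; omega)
        simp only [Finset.mem_insert, Finset.mem_singleton] at hi hj
        push_neg at hi hj
        exact bowtieV h1 h2 hr haX hbX hne haa hbb hab hst' hij hi.1 hi.2 hj.1 hj.2
          has' hat' hPi hPj
      refine ⟨?_, hAone⟩
      intro m
      by_contra hm
      have hsubA : ∀ k l, ¬¬G.Adj v (a k) → ¬¬G.Adj v (a l) → k = l := by
        intro k l hk hl
        exact hAone k l (not_not.mp hk) (not_not.mp hl)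
      obtain ⟨i, j, hij, hi, hj, hPi, hPj⟩ :=
        pick2P (fun k => ¬G.Adj v (a k)) hsubA {m}
          (by simp only [Finset.card_singleton]; omega)
      simp only [Finset.mem_singleton] at hi hj
      refine no2P1P2 h1 (u := v) (w := b m) (x := a i) (y := a j)
        (fun h => hv (h ▸ hbX m)) ((haa i j).2 hij) hm hPi hPj ?_ ?_
      · exact fun h => hi ((hab i m).1 h.symm)
      · exact fun h => hj ((hab j m).1 h.symm)
  · by_cases hB : ∃ s t, s ≠ t ∧ ¬G.Adj v (b s) ∧ ¬G.Adj v (b t)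
    · -- misses ≥ 2 b's, at most one missed a : right disjunct
      push_neg at hA
      right
      obtain ⟨s, t, hst, hbs, hbt⟩ := hB
      have hsubA : ∀ k l, ¬G.Adj v (a k) → ¬G.Adj v (a l) → k = l := by
        intro k l hk hl
        by_contra hkl
        exact hl (hA k l hkl hk)
      have hBone : ∀ s' t', G.Adj v (b s') → G.Adj v (b t') → s' = t' := by
        intro s' t' hbs' hbt'
        by_contra hst'
        obtain ⟨i, j, hij, hi, hj, hPi, hPj⟩ :=
          pick2P (fun k => G.Adj v (a k)) hsubA {s', t'}
            (by have := card_pair_le s' t'; omega)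
        simp only [Finset.mem_insert, Finset.mem_singleton] at hi hj
        push_neg at hi hj
        exact bowtieV h1 h2 hr haX hbX hne haa hbb hab hij hst' hi.1.symm hj.1.symm
          hi.2.symm hj.2.symm hPi hPj hbs' hbt'
      refine ⟨?_, hBone⟩
      intro m
      by_contra hm
      have hsubB : ∀ k l, ¬¬G.Adj v (b k) → ¬¬G.Adj v (b l) → k = l := by
        intro k l hk hl
        exact hBone k l (not_not.mp hk) (not_not.mp hl)
      obtain ⟨i, j, hij, hi, hj, hPi, hPj⟩ :=
        pick2P (fun k => ¬G.Adj v (b k)) hsubB {m}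
          (by simp only [Finset.card_singleton]; omega)
      simp only [Finset.mem_singleton] at hi hj
      refine no2P1P2 h1 (u := v) (w := a m) (x := b i) (y := b j)
        (fun h => hv (h ▸ haX m)) ((hbb i j).2 hij) hm hPi hPj ?_ ?_
      · exact fun h => hi ((hab m i).1 h).symm
      · exact fun h => hj ((hab m j).1 h).symm
    · -- near complete : bowtie
      exfalso
      push_neg at hA hB
      have hsubA : ∀ k l, ¬G.Adj v (a k) → ¬G.Adj v (a l) → k = l := by
        intro k l hk hl
        by_contra hkl
        exact hl (hA k l hkl hk)
      have hsubB : ∀ k l, ¬G.Adj v (b k) → ¬G.Adj v (b l) → k = l := by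
        intro k l hk hl
        by_contra hkl
        exact hl (hB k l hkl hk)
      obtain ⟨s, t, hst, _, _, hPs, hPt⟩ :=
        pick2P (fun k => G.Adj v (a k)) hsubA ∅ (by simp; omega)
      obtain ⟨i, j, hij, hi, hj, hPi, hPj⟩ :=
        pick2P (fun k => G.Adj v (b k)) hsubB {s, t}
          (by have := card_pair_le s t; omega)
      simp only [Finset.mem_insert, Finset.mem_singleton] at hi hj
      push_neg at hi hj
      exact bowtieV h1 h2 hr haX hbX hne haa hbb hab hst hij hi.1 hi.2 hj.1 hj.2
        hPs hPt hPi hPj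

lemma two_distinct : ∃ i j : Fin r, i ≠ j :=
  ⟨⟨0, by omega⟩, ⟨1, by omega⟩, by simp⟩

lemma a_inj : Function.Injective a := by
  intro i j hij
  by_contra hne'
  exact G.irrefl (hij ▸ (haa i j).2 hne')

lemma b_inj : Function.Injective b := by
  intro i j hij
  by_contra hne'
  exact G.irrefl (hij ▸ (hbb i j).2 hne')

/-- A vertex outside `X` complete to `B` has at most one `a`-neighbour. -/
lemma P_one {v : V} (hv : v ∉ X) (hvB : ∀ i, G.Adj v (b i)) :
    ∀ s t, G.Adj v (a s) → G.Adj v (a t) → s = t := by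
  rcases classify h1 h2 hr haX hbX hne haa hbb hab hv with ⟨_, h⟩ | ⟨_, hone⟩
  · exact h
  · obtain ⟨i, j, hij⟩ := two_distinct h1 h2 hr haX hbX hne haa hbb hab
    exact absurd (hone i j (hvB i) (hvB j)) hij

/-- A vertex outside `X` complete to `A` has at most one `b`-neighbour. -/
lemma Q_one {v : V} (hv : v ∉ X) (hvA : ∀ i, G.Adj v (a i)) :
    ∀ s t, G.Adj v (b s) → G.Adj v (b t) → s = t := by
  rcases classify h1 h2 hr haX hbX hne haa hbb hab hv with ⟨hcb, _⟩ | ⟨_, h⟩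
  · obtain ⟨i, j, hij⟩ := two_distinct h1 h2 hr haX hbX hne haa hbb hab
    exact absurd (P_one h1 h2 hr haX hbX hne haa hbb hab hv hcb i j (hvA i) (hvA j)) hij
  · exact h

/-- Vertices outside `X` complete to `B` form a clique. -/
lemma P_clique {v w : V} (hv : v ∉ X) (hw : w ∉ X) (hvB : ∀ i, G.Adj v (b i))
    (hwB : ∀ i, G.Adj w (b i)) (hvw : v ≠ w) : G.Adj v w := by
  classical
  by_contra hadj
  set sv : Finset (Fin r) := Finset.univ.filter (fun k => G.Adj v (a k)) with hsv
  set sw : Finset (Fin r) := Finset.univ.filter (fun k => G.Adj w (a k)) with hsw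
  have hv1 : sv.card ≤ 1 := Finset.card_le_one.2 (by
    intro x hx y hy
    simp only [hsv, Finset.mem_filter] at hx hy
    exact P_one h1 h2 hr haX hbX hne haa hbb hab hv hvB x y hx.2 hy.2)
  have hw1 : sw.card ≤ 1 := Finset.card_le_one.2 (by
    intro x hx y hy
    simp only [hsw, Finset.mem_filter] at hx hy
    exact P_one h1 h2 hr haX hbX hne haa hbb hab hw hwB x y hx.2 hy.2)
  obtain ⟨i, j, _, hij, _, _, hi, hj, _⟩ := pick3 (sv ∪ sw) (by
    have := Finset.card_union_le sv sw
    omega)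
  have hmem : ∀ k, k ∉ sv ∪ sw → ¬G.Adj v (a k) ∧ ¬G.Adj w (a k) := by
    intro k hk
    simp only [Finset.mem_union, hsv, hsw, Finset.mem_filter, Finset.mem_univ,
      true_and] at hk
    push_neg at hk
    exact hk
  obtain ⟨hvi, hwi⟩ := hmem i hi
  obtain ⟨hvj, hwj⟩ := hmem j hj
  exact no2P1P2 h1 hvw ((haa i j).2 hij) hadj hvi hvj hwi hwj

/-- Vertices outside `X` complete to `A` form a clique. -/
lemma Q_clique {v w : V} (hv : v ∉ X) (hw : w ∉ X) (hvA : ∀ i, G.Adj v (a i))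
    (hwA : ∀ i, G.Adj w (a i)) (hvw : v ≠ w) : G.Adj v w := by
  classical
  by_contra hadj
  set sv : Finset (Fin r) := Finset.univ.filter (fun k => G.Adj v (b k)) with hsv
  set sw : Finset (Fin r) := Finset.univ.filter (fun k => G.Adj w (b k)) with hsw
  have hv1 : sv.card ≤ 1 := Finset.card_le_one.2 (by
    intro x hx y hy
    simp only [hsv, Finset.mem_filter] at hx hy
    exact Q_one h1 h2 hr haX hbX hne haa hbb hab hv hvA x y hx.2 hy.2)
  have hw1 : sw.card ≤ 1 := Finset.card_le_one.2 (by
    intro x hx y hy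
    simp only [hsw, Finset.mem_filter] at hx hy
    exact Q_one h1 h2 hr haX hbX hne haa hbb hab hw hwA x y hx.2 hy.2)
  obtain ⟨i, j, _, hij, _, _, hi, hj, _⟩ := pick3 (sv ∪ sw) (by
    have := Finset.card_union_le sv sw
    omega)
  have hmem : ∀ k, k ∉ sv ∪ sw → ¬G.Adj v (b k) ∧ ¬G.Adj w (b k) := by
    intro k hk
    simp only [Finset.mem_union, hsv, hsw, Finset.mem_filter, Finset.mem_univ,
      true_and] at hk
    push_neg at hk
    exact hk
  obtain ⟨hvi, hwi⟩ := hmem i hi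
  obtain ⟨hvj, hwj⟩ := hmem j hj
  exact no2P1P2 h1 hvw ((hbb i j).2 hij) hadj hvi hvj hwi hwj

/-- A `B`-complete vertex with an `a`-neighbour is nonadjacent to any `A`-complete
vertex outside `X`. -/
lemma PA_anti_Q {p q : V} (hp : p ∉ X) (hq : q ∉ X) (hpB : ∀ i, G.Adj p (b i))
    {m : Fin r} (hpa : G.Adj p (a m)) (hqA : ∀ i, G.Adj q (a i)) : ¬G.Adj p q := by
  classical
  intro hpq
  set sq : Finset (Fin r) := Finset.univ.filter (fun k => G.Adj q (b k)) with hsq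
  have hq1 : sq.card ≤ 1 := Finset.card_le_one.2 (by
    intro x hx y hy
    simp only [hsq, Finset.mem_filter] at hx hy
    exact Q_one h1 h2 hr haX hbX hne haa hbb hab hq hqA x y hx.2 hy.2)
  obtain ⟨i, j, _, hij, _, _, hi, hj, _⟩ := pick3 ({m} ∪ sq) (by
    have := Finset.card_union_le ({m} : Finset (Fin r)) sq
    simp only [Finset.card_singleton] at this
    omega)
  have hmem : ∀ k, k ∉ ({m} : Finset (Fin r)) ∪ sq → k ≠ m ∧ ¬G.Adj q (b k) := by
    intro k hk
    simp only [Finset.mem_union, hsq, Finset.mem_filter, Finset.mem_univ, true_and,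
      Finset.mem_singleton] at hk
    push_neg at hk
    exact hk
  obtain ⟨him, hqi⟩ := hmem i hi
  obtain ⟨hjm, hqj⟩ := hmem j hj
  exact noBowtie h2 (c := p) (x := a m) (y := q) (u := b i) (w := b j)
    hpa hpq (hpB i) (hpB j) (hqA m).symm ((hbb i j).2 hij)
    (fun h => him ((hab m i).1 h).symm) (fun h => hjm ((hab m j).1 h).symm) hqi hqj

/-- An `A`-complete vertex with a `b`-neighbour is nonadjacent to any `B`-complete
vertex outside `X`. -/
lemma QB_anti_P {p q : V} (hp : p ∉ X) (hq : q ∉ X) (hqA : ∀ i, G.Adj q (a i))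
    {m : Fin r} (hqb : G.Adj q (b m)) (hpB : ∀ i, G.Adj p (b i)) : ¬G.Adj p q := by
  classical
  intro hpq
  set sp : Finset (Fin r) := Finset.univ.filter (fun k => G.Adj p (a k)) with hsp
  have hp1 : sp.card ≤ 1 := Finset.card_le_one.2 (by
    intro x hx y hy
    simp only [hsp, Finset.mem_filter] at hx hy
    exact P_one h1 h2 hr haX hbX hne haa hbb hab hp hpB x y hx.2 hy.2)
  obtain ⟨i, j, _, hij, _, _, hi, hj, _⟩ := pick3 ({m} ∪ sp) (by
    have := Finset.card_union_le ({m} : Finset (Fin r)) sp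
    simp only [Finset.card_singleton] at this
    omega)
  have hmem : ∀ k, k ∉ ({m} : Finset (Fin r)) ∪ sp → k ≠ m ∧ ¬G.Adj p (a k) := by
    intro k hk
    simp only [Finset.mem_union, hsp, Finset.mem_filter, Finset.mem_univ, true_and,
      Finset.mem_singleton] at hk
    push_neg at hk
    exact hk
  obtain ⟨him, hpi⟩ := hmem i hi
  obtain ⟨hjm, hpj⟩ := hmem j hj
  exact noBowtie h2 (c := q) (x := b m) (y := p) (u := a i) (w := a j)
    hqb hpq.symm (hqA i) (hqA j) (hpB m).symm ((haa i j).2 hij)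
    (fun h => him ((hab i m).1 h.symm)) (fun h => hjm ((hab j m).1 h.symm)) hpi hpj

end Structure

section Max
variable {V : Type*} {G : SimpleGraph V}
  {r : ℕ} (hr : 5 ≤ r) {X : Set V} {a b : Fin r → V}
  (haX : ∀ i, a i ∈ X) (hbX : ∀ i, b i ∈ X)
  (hXc : ∀ x ∈ X, (∃ i, x = a i) ∨ (∃ i, x = b i))
  (hne : ∀ i j, a i ≠ b j)
  (hainj : Function.Injective a) (hbinj : Function.Injective b)
  (haa : ∀ i j, G.Adj (a i) (a j) ↔ i ≠ j)
  (hbb : ∀ i j, G.Adj (b i) (b j) ↔ i ≠ j)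
  (hab : ∀ i j, G.Adj (a i) (b j) ↔ i = j)
  (hmax : ∀ r' : ℕ, r < r' → ∀ S : Set V, Disjoint S X →
      ¬ Nonempty (G.induce (X ∪ S) ≃g KboxK r'))

include hr haX hbX hXc hne hainj hbinj haa hbb hab hmax

/-- Maximality: a `B`-complete and an `A`-complete outside vertex with no other
`X`-neighbours cannot be adjacent. -/
lemma P0_anti_Q0 {p q : V} (hp : p ∉ X) (hq : q ∉ X) (hpq : p ≠ q)
    (hpB : ∀ i, G.Adj p (b i)) (hqA : ∀ i, G.Adj q (a i))
    (hpA : ∀ i, ¬G.Adj p (a i)) (hqB : ∀ i, ¬G.Adj q (b i)) : ¬G.Adj p q := by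
  classical
  intro hadj
  set S : Set V := {p, q} with hS
  have hdisj : Disjoint S X := by
    rw [Set.disjoint_left]
    rintro x (rfl | rfl)
    · exact hp
    · exact hq
  apply hmax (r + 1) (by omega) S hdisj
  -- the vertex map
  let f : Fin (r + 1) ⊕ Fin (r + 1) → V :=
    Sum.elim (fun i => Fin.lastCases q (fun i => a i) i)
      (fun i => Fin.lastCases p (fun i => b i) i)
  have hfl : ∀ i : Fin r, f (Sum.inl i.castSucc) = a i := fun i => by
    simp [f]
  have hflast : f (Sum.inl (Fin.last r)) = q := by simp [f]
  have hfr : ∀ i : Fin r, f (Sum.inr i.castSucc) = b i := fun i => by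
    simp [f]
  have hfrlast : f (Sum.inr (Fin.last r)) = p := by simp [f]
  have hmem : ∀ z, f z ∈ X ∪ S := by
    rintro (i | i) <;> induction i using Fin.lastCases
    · rw [hflast]; exact Or.inr (Or.inr rfl)
    · rename_i i; rw [hfl i]; exact Or.inl (haX i)
    · rw [hfrlast]; exact Or.inr (Or.inl rfl)
    · rename_i i; rw [hfr i]; exact Or.inl (hbX i)
  let f' : Fin (r + 1) ⊕ Fin (r + 1) → ↥(X ∪ S) := fun z => ⟨f z, hmem z⟩
  -- injectivity
  have hinj : Function.Injective f' := by
    rintro (i | i) (j | j) hij <;>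
      induction i using Fin.lastCases <;> induction j using Fin.lastCases <;>
      simp only [f', Subtype.mk.injEq, hfl, hflast, hfr, hfrlast] at hij
    · rfl
    · rename_i j'
      exact absurd (show q ∈ X by rw [hij]; exact haX j') hq
    · rename_i i'
      exact absurd (show q ∈ X by rw [← hij]; exact haX i') hq
    · rename_i i' j'
      rw [hainj hij]
    · exact absurd hij.symm hpq
    · rename_i j'
      exact absurd (show q ∈ X by rw [hij]; exact hbX j') hq
    · rename_i i'
      exact absurd (show p ∈ X by rw [← hij]; exact haX i') hp
    · rename_i i' j'
      exact absurd hij (hne i' j')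
    · exact absurd hij hpq
    · rename_i j'
      exact absurd (show p ∈ X by rw [hij]; exact haX j') hp
    · rename_i i'
      exact absurd (show q ∈ X by rw [← hij]; exact hbX i') hq
    · rename_i i' j'
      exact absurd hij.symm (hne j' i')
    · rfl
    · rename_i j'
      exact absurd (show p ∈ X by rw [hij]; exact hbX j') hp
    · rename_i i'
      exact absurd (show p ∈ X by rw [← hij]; exact hbX i') hp
    · rename_i i' j'
      rw [hbinj hij]
  -- surjectivity
  have hsurj : Function.Surjective f' := by
    rintro ⟨x, hx | hx⟩
    · rcases hXc x hx with ⟨i, rfl⟩ | ⟨i, rfl⟩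
      · exact ⟨Sum.inl i.castSucc, Subtype.ext (hfl i)⟩
      · exact ⟨Sum.inr i.castSucc, Subtype.ext (hfr i)⟩
    · rcases hx with rfl | rfl
      · exact ⟨Sum.inr (Fin.last r), Subtype.ext hfrlast⟩
      · exact ⟨Sum.inl (Fin.last r), Subtype.ext hflast⟩
  -- adjacency transfer
  have hadjiff : ∀ z z', (KboxK (r + 1)).Adj z z' ↔ G.Adj (f z) (f z') := by
    have cne : ∀ i : Fin r, i.castSucc ≠ Fin.last r := fun i => (Fin.castSucc_lt_last i).ne
    rintro (i | i) (j | j) <;>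
      induction i using Fin.lastCases <;> induction j using Fin.lastCases
    · rw [kbox_ll, hflast]
      exact iff_of_false (fun h => h rfl) G.irrefl
    · rename_i j'
      rw [kbox_ll, hflast, hfl j']
      exact iff_of_true (fun h => cne j' h.symm) (hqA j')
    · rename_i i'
      rw [kbox_ll, hfl i', hflast]
      exact iff_of_true (cne i') (hqA i').symm
    · rename_i i' j'
      rw [kbox_ll, hfl i', hfl j', haa]
      simp [Fin.castSucc_inj]
    · rw [kbox_lr, hflast, hfrlast]
      exact iff_of_true rfl hadj.symm
    · rename_i j'
      rw [kbox_lr, hflast, hfr j']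
      exact iff_of_false (fun h => cne j' h.symm) (hqB j')
    · rename_i i'
      rw [kbox_lr, hfl i', hfrlast]
      exact iff_of_false (cne i') (fun h => hpA i' h.symm)
    · rename_i i' j'
      rw [kbox_lr, hfl i', hfr j', hab]
      simp [Fin.castSucc_inj]
    · rw [kbox_rl, hfrlast, hflast]
      exact iff_of_true rfl hadj
    · rename_i j'
      rw [kbox_rl, hfrlast, hfl j']
      exact iff_of_false (fun h => cne j' h.symm) (hpA j')
    · rename_i i'
      rw [kbox_rl, hfr i', hflast]
      exact iff_of_false (cne i') (fun h => hqB i' h.symm)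
    · rename_i i' j'
      rw [kbox_rl, hfr i', hfl j']
      exact ⟨fun h => ((hab j' i').2 (Fin.castSucc_inj.mp h).symm).symm,
        fun h => Fin.castSucc_inj.2 ((hab j' i').1 h.symm).symm⟩
    · rw [kbox_rr, hfrlast]
      exact iff_of_false (fun h => h rfl) G.irrefl
    · rename_i j'
      rw [kbox_rr, hfrlast, hfr j']
      exact iff_of_true (fun h => cne j' h.symm) (hpB j')
    · rename_i i'
      rw [kbox_rr, hfr i', hfrlast]
      exact iff_of_true (cne i') (hpB i').symm
    · rename_i i' j'
      rw [kbox_rr, hfr i', hfr j', hbb]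
      simp [Fin.castSucc_inj]
  -- build the isomorphism
  refine ⟨⟨(Equiv.ofBijective f' ⟨hinj, hsurj⟩).symm, ?_⟩⟩
  rintro x y
  obtain ⟨z, rfl⟩ := hsurj x
  obtain ⟨z', rfl⟩ := hsurj y
  have h1 : (Equiv.ofBijective f' ⟨hinj, hsurj⟩).symm (f' z) = z :=
    Equiv.symm_apply_apply _ z
  have h2 : (Equiv.ofBijective f' ⟨hinj, hsurj⟩).symm (f' z') = z' :=
    Equiv.symm_apply_apply _ z'
  rw [h1, h2]
  exact hadjiff z z'
end Max

section Cat
variable {n : ℕ}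

/-- Caterpillar tree on `Fin n × Fin 2`: spine `(i,0)`, leaves `(i,1)`. -/
def catGraph (n : ℕ) : SimpleGraph (Fin n × Fin 2) :=
  SimpleGraph.fromRel (fun x y =>
    (x.2 = 0 ∧ y.2 = 0 ∧ (y.1 : ℕ) = (x.1 : ℕ) + 1) ∨ (x.2 = 0 ∧ y.2 = 1 ∧ x.1 = y.1))

lemma cat_adj_ss (i j : Fin n) :
    (catGraph n).Adj (i, 0) (j, 0) ↔ ((j : ℕ) = i + 1 ∨ (i : ℕ) = j + 1) := by
  rw [catGraph, fromRel_adj]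
  constructor
  · rintro ⟨-, h⟩
    rcases h with (⟨-, -, h⟩ | ⟨-, h0, -⟩) | (⟨-, -, h⟩ | ⟨-, h0, -⟩)
    · exact Or.inl h
    · simp at h0
    · exact Or.inr h
    · simp at h0
  · intro h
    refine ⟨fun hc => ?_, ?_⟩
    · rw [Prod.mk.injEq, Fin.ext_iff] at hc
      omega
    · rcases h with h | h
      · exact Or.inl (Or.inl ⟨rfl, rfl, h⟩)
      · exact Or.inr (Or.inl ⟨rfl, rfl, h⟩)

lemma cat_adj_sl (i j : Fin n) : (catGraph n).Adj (i, 0) (j, 1) ↔ i = j := by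
  rw [catGraph, fromRel_adj]
  constructor
  · rintro ⟨-, h⟩
    rcases h with (⟨-, h0, -⟩ | ⟨-, -, h⟩) | (⟨h0, -, -⟩ | ⟨h0, -, -⟩)
    · simp at h0
    · exact h
    · simp at h0
    · simp at h0
  · rintro rfl
    exact ⟨by simp, Or.inl (Or.inr ⟨rfl, rfl, rfl⟩)⟩

lemma cat_adj_ll (i j : Fin n) : ¬(catGraph n).Adj (i, 1) (j, 1) := by
  rw [catGraph, fromRel_adj]
  rintro ⟨-, h⟩
  rcases h with (⟨h0, -, -⟩ | ⟨h0, -, -⟩) | (⟨h0, -, -⟩ | ⟨h0, -, -⟩) <;> simp at h0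

lemma cat_adj_ls (i j : Fin n) : (catGraph n).Adj (i, 1) (j, 0) ↔ i = j := by
  rw [adj_comm, cat_adj_sl]; exact eq_comm

/-- Every vertex of the caterpillar has a canonical case form. -/
lemma cat_cases (x : Fin n × Fin 2) : (∃ i, x = (i, 0)) ∨ (∃ i, x = (i, 1)) := by
  rcases x with ⟨i, c⟩
  fin_cases c
  · exact Or.inl ⟨i, rfl⟩
  · exact Or.inr ⟨i, rfl⟩

/-- Chain reachability along the spine. -/
lemma chain_reach (H : SimpleGraph (Fin n × Fin 2)) :
    ∀ (d m : ℕ) (hmd : m + d < n),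
      (∀ k (hk : m ≤ k) (hk' : k + 1 ≤ m + d), H.Adj (⟨k, by omega⟩, 0) (⟨k + 1, by omega⟩, 0)) →
      H.Reachable (⟨m, by omega⟩, 0) (⟨m + d, hmd⟩, 0) := by
  intro d
  induction d with
  | zero => intro m hmd _; exact Reachable.refl _
  | succ d ih =>
    intro m hmd hadj
    have h1 : H.Reachable (⟨m, by omega⟩, 0) (⟨m + d, by omega⟩, 0) :=
      ih m (by omega) (fun k hk hk' => hadj k hk (by omega))
    have h2 : ((⟨m + (d + 1), hmd⟩ : Fin n)) = ⟨m + d + 1, by omega⟩ := Fin.ext (show m + (d + 1) = m + d + 1 by omega)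
    refine h1.trans (Adj.reachable ?_)
    rw [h2]
    exact hadj (m + d) (by omega) (by omega)


/-- The spine edge between positions `k` and `k+1`. -/
def spineEdge (n : ℕ) (k : ℕ) (hk : k + 1 < n) : Sym2 (Fin n × Fin 2) :=
  s(((⟨k, by omega⟩ : Fin n), 0), ((⟨k + 1, hk⟩ : Fin n), 0))

lemma sym2_pair_eq {i j : Fin n} {c d : Fin 2} {k : ℕ} (hk : k + 1 < n) :
    s((i, c), (j, d)) = spineEdge n k hk ↔
      (((i : ℕ) = k ∧ c = 0 ∧ (j : ℕ) = k + 1 ∧ d = 0) ∨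
        ((i : ℕ) = k + 1 ∧ c = 0 ∧ (j : ℕ) = k ∧ d = 0)) := by
  rw [spineEdge, Sym2.eq_iff]
  simp only [Prod.ext_iff, Fin.ext_iff]
  tauto

/-- Invariant for a deleted spine edge: position `≤ k` is preserved. -/
lemma spine_invariant {k : ℕ} (hk : k + 1 < n) (s : Set (Sym2 (Fin n × Fin 2)))
    (hs : spineEdge n k hk ∈ s) (x y : Fin n × Fin 2)
    (h : ((catGraph n).deleteEdges s).Adj x y) :
    ((x.1 : ℕ) ≤ k ↔ (y.1 : ℕ) ≤ k) := by
  rw [deleteEdges_adj] at h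
  obtain ⟨hadj, hmem'⟩ := h
  have hmem : ¬(s(x, y) = spineEdge n k hk) := fun he => hmem' (he ▸ hs)
  rcases cat_cases x with ⟨i, rfl⟩ | ⟨i, rfl⟩ <;> rcases cat_cases y with ⟨j, rfl⟩ | ⟨j, rfl⟩
  · rw [cat_adj_ss] at hadj
    have hmem' : ¬(((i : ℕ) = k ∧ (j : ℕ) = k + 1) ∨ ((i : ℕ) = k + 1 ∧ (j : ℕ) = k)) := by
      intro hc
      apply hmem
      rw [sym2_pair_eq hk]
      rcases hc with ⟨ha, hb⟩ | ⟨ha, hb⟩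
      · exact Or.inl ⟨ha, rfl, hb, rfl⟩
      · exact Or.inr ⟨ha, rfl, hb, rfl⟩
    show (i : ℕ) ≤ k ↔ (j : ℕ) ≤ k
    omega
  · rw [cat_adj_sl] at hadj
    simp [hadj]
  · rw [cat_adj_ls] at hadj
    simp [hadj]
  · exact absurd hadj (cat_adj_ll i j)

/-- Invariant for a deleted leaf edge. -/
lemma leaf_invariant (i : Fin n) (s : Set (Sym2 (Fin n × Fin 2)))
    (hs : s((i, (0 : Fin 2)), (i, 1)) ∈ s) (x y : Fin n × Fin 2)
    (h : ((catGraph n).deleteEdges s).Adj x y) :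
    (x = (i, 1) ↔ y = (i, 1)) := by
  rw [deleteEdges_adj] at h
  obtain ⟨hadj, hmem'⟩ := h
  have hmem : ¬(s(x, y) = s((i, (0 : Fin 2)), (i, 1))) := fun he => hmem' (he ▸ hs)
  constructor
  · rintro rfl
    exfalso
    rcases cat_cases y with ⟨j, rfl⟩ | ⟨j, rfl⟩
    · rw [cat_adj_ls] at hadj
      subst hadj
      exact hmem (Sym2.eq_swap)
    · exact cat_adj_ll _ _ hadj
  · rintro rfl
    exfalso
    rcases cat_cases x with ⟨j, rfl⟩ | ⟨j, rfl⟩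
    · rw [cat_adj_sl] at hadj
      subst hadj
      exact hmem rfl
    · exact cat_adj_ll _ _ hadj

lemma cat_reach_root (hn : 1 ≤ n) (x : Fin n × Fin 2) :
    (catGraph n).Reachable x ((⟨0, by omega⟩ : Fin n), 0) := by
  have hsp : ∀ i : Fin n, (catGraph n).Reachable (i, 0) ((⟨0, by omega⟩ : Fin n), 0) := by
    intro i
    have h0 : ((⟨0 + (i : ℕ), by omega⟩ : Fin n), (0 : Fin 2)) = (i, 0) := by
      rw [Prod.mk.injEq]
      exact ⟨Fin.ext (show (0 : ℕ) + (i : ℕ) = (i : ℕ) by omega), rfl⟩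
    have := chain_reach (catGraph n) (i : ℕ) 0 (by omega)
      (fun k hk hk' => (cat_adj_ss _ _).2 (Or.inl (by simp)))
    rw [h0] at this
    exact this.symm
  rcases cat_cases x with ⟨i, rfl⟩ | ⟨i, rfl⟩
  · exact hsp i
  · exact ((cat_adj_ls i i).2 rfl).reachable.trans (hsp i)

lemma cat_connected (hn : 1 ≤ n) : (catGraph n).Connected := by
  rw [connected_iff]
  refine ⟨fun x y => (cat_reach_root hn x).trans (cat_reach_root hn y).symm,
    ⟨((⟨0, by omega⟩ : Fin n), 0)⟩⟩

lemma cat_acyclic (hn : 1 ≤ n) : (catGraph n).IsAcyclic := by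
  rw [isAcyclic_iff_forall_adj_isBridge]
  intro x y hadj
  rw [isBridge_iff]
  rcases cat_cases x with ⟨i, rfl⟩ | ⟨i, rfl⟩ <;> rcases cat_cases y with ⟨j, rfl⟩ | ⟨j, rfl⟩
  · rw [cat_adj_ss] at hadj
    rcases hadj with hj | hj
    · -- j = i + 1
      have hk : (i : ℕ) + 1 < n := by omega
      have hE : s(((i : Fin n), (0 : Fin 2)), (j, 0)) = spineEdge n (i : ℕ) hk := by
        rw [sym2_pair_eq hk]
        exact Or.inl ⟨rfl, rfl, hj, rfl⟩
      rw [hE]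
      intro hreach
      have hreach' : ((catGraph n).deleteEdges {spineEdge n (i : ℕ) hk}).Reachable
          ((i : Fin n), 0) (j, 0) := hreach
      have := reach_invariant (fun z => (z.1 : ℕ) ≤ (i : ℕ)) (spine_invariant hk {spineEdge n _ hk} rfl) hreach'
      simp only [] at this
      omega
    · have hk : (j : ℕ) + 1 < n := by omega
      have hE : s(((i : Fin n), (0 : Fin 2)), (j, 0)) = spineEdge n (j : ℕ) hk := by
        rw [sym2_pair_eq hk]
        exact Or.inr ⟨hj, rfl, rfl, rfl⟩
      rw [hE]
      intro hreach
      have hreach' : ((catGraph n).deleteEdges {spineEdge n (j : ℕ) hk}).Reachable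
          ((i : Fin n), 0) (j, 0) := hreach
      have := reach_invariant (fun z => (z.1 : ℕ) ≤ (j : ℕ)) (spine_invariant hk {spineEdge n _ hk} rfl) hreach'
      simp only [] at this
      omega
  · rw [cat_adj_sl] at hadj
    subst hadj
    intro hreach
    have hreach' : ((catGraph n).deleteEdges {s(((i : Fin n), (0 : Fin 2)), (i, 1))}).Reachable
        (i, 0) (i, 1) := hreach
    have := reach_invariant (fun z => z = ((i : Fin n), (1 : Fin 2)))
      (leaf_invariant i {s((i, (0 : Fin 2)), (i, 1))} rfl) hreach'
    have h2 := this.2 rfl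
    exact absurd (show (0 : Fin 2) = 1 from congrArg Prod.snd h2) (by decide)
  · rw [cat_adj_ls] at hadj
    subst hadj
    intro hreach
    have heq : s(((i : Fin n), (1 : Fin 2)), (i, 0)) = s((i, (0:Fin 2)), (i, 1)) :=
      Sym2.eq_swap
    rw [heq] at hreach
    have hreach' : ((catGraph n).deleteEdges {s(((i : Fin n), (0 : Fin 2)), (i, 1))}).Reachable
        (i, 1) (i, 0) := hreach
    have := reach_invariant (fun z => z = ((i : Fin n), (1 : Fin 2)))
      (leaf_invariant i {s((i, (0 : Fin 2)), (i, 1))} rfl) hreach'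
    have h2 := this.1 rfl
    exact absurd (show (0 : Fin 2) = 1 from congrArg Prod.snd h2) (by decide)
  · exact absurd hadj (cat_adj_ll i j)

lemma cat_leaf_nbr (i : Fin n) :
    (catGraph n).neighborSet (i, 1) = {(i, 0)} := by
  ext z
  simp only [mem_neighborSet, Set.mem_singleton_iff]
  rcases cat_cases z with ⟨j, rfl⟩ | ⟨j, rfl⟩
  · rw [cat_adj_ls]
    constructor
    · rintro rfl; rfl
    · intro h; rw [Prod.mk.injEq] at h; exact h.1.symm
  · constructor
    · intro h; exact absurd h (cat_adj_ll i j)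
    · intro h; rw [Prod.mk.injEq] at h; exact absurd h.2 (by decide)

lemma cat_leaf_deg (i : Fin n) : ((catGraph n).neighborSet (i, 1)).ncard = 1 := by
  rw [cat_leaf_nbr, Set.ncard_singleton]

lemma cat_spine_deg (hn : 1 ≤ n) (i : Fin n) :
    ((catGraph n).neighborSet (i, 0)).ncard ≤ 3 := by
  classical
  have hsub : (catGraph n).neighborSet (i, 0) ⊆
      {((⟨min ((i : ℕ) + 1) (n - 1), by omega⟩ : Fin n), (0 : Fin 2)),
        ((⟨(i : ℕ) - 1, by omega⟩ : Fin n), 0), (i, 1)} := by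
    intro z hz
    rw [mem_neighborSet] at hz
    rcases cat_cases z with ⟨j, rfl⟩ | ⟨j, rfl⟩
    · rw [cat_adj_ss] at hz
      have hjlt := j.isLt
      rcases hz with hz | hz
      · left
        rw [Prod.mk.injEq]
        refine ⟨Fin.ext ?_, rfl⟩
        show (j : ℕ) = min ((i : ℕ) + 1) (n - 1)
        omega
      · right; left
        rw [Prod.mk.injEq]
        refine ⟨Fin.ext ?_, rfl⟩
        show (j : ℕ) = (i : ℕ) - 1
        omega
    · rw [cat_adj_sl] at hz
      subst hz
      right; right
      rfl
  calc ((catGraph n).neighborSet (i, 0)).ncard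
      ≤ _ := Set.ncard_le_ncard hsub (Set.toFinite _)
    _ ≤ 3 := by
        refine (Set.ncard_insert_le _ _).trans ?_
        have := Set.ncard_insert_le ((⟨(i : ℕ) - 1, by omega⟩ : Fin n), (0 : Fin 2))
          ({((i : Fin n), (1 : Fin 2))} : Set (Fin n × Fin 2))
        simp only [Set.ncard_singleton] at this ⊢
        omega

lemma cat_spine_deg_ne_one (hn : 2 ≤ n) (i : Fin n) :
    ((catGraph n).neighborSet (i, 0)).ncard ≠ 1 := by
  intro h
  obtain ⟨z, hz⟩ := Set.ncard_eq_one.mp h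
  have h1 : ((i : Fin n), (1 : Fin 2)) ∈ (catGraph n).neighborSet (i, 0) := by
    rw [mem_neighborSet, cat_adj_sl]
  by_cases hi : (i : ℕ) + 1 < n
  · have h2 : ((⟨(i : ℕ) + 1, hi⟩ : Fin n), (0 : Fin 2)) ∈ (catGraph n).neighborSet (i, 0) := by
      rw [mem_neighborSet, cat_adj_ss]
      exact Or.inl rfl
    rw [hz] at h1 h2
    rw [Set.mem_singleton_iff] at h1 h2
    have heq := h1.trans h2.symm
    rw [Prod.mk.injEq] at heq
    exact absurd heq.2 (by decide)
  · have hi1 : 1 ≤ (i : ℕ) := by have := i.isLt; omega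
    have h2 : ((⟨(i : ℕ) - 1, by omega⟩ : Fin n), (0 : Fin 2)) ∈ (catGraph n).neighborSet (i, 0) := by
      rw [mem_neighborSet, cat_adj_ss]
      right
      show (i : ℕ) = (i : ℕ) - 1 + 1
      omega
    rw [hz] at h1 h2
    rw [Set.mem_singleton_iff] at h1 h2
    have heq := h1.trans h2.symm
    rw [Prod.mk.injEq] at heq
    exact absurd heq.2 (by decide)

end Cat

section BD
variable {V : Type*} {n : ℕ} (G : SimpleGraph V) (σ : V ≃ Fin n) (hn : 2 ≤ n)

/-- The caterpillar branch decomposition associated with an ordering `σ`. -/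
def catBD : BranchDecomp G where
  L := Fin n × Fin 2
  T := catGraph n
  finite := inferInstance
  connected := cat_connected (by omega)
  acyclic := cat_acyclic (by omega)
  subcubic := by
    intro x
    rcases cat_cases x with ⟨i, rfl⟩ | ⟨i, rfl⟩
    · exact cat_spine_deg (by omega) i
    · rw [cat_leaf_deg i]; omega
  δ := fun v => (σ v, 1)
  δ_inj := by
    intro v w h
    rw [Prod.mk.injEq] at h
    exact σ.injective h.1
  δ_leaf := fun v => cat_leaf_deg (σ v)
  δ_surj := by
    intro x hx
    rcases cat_cases x with ⟨i, rfl⟩ | ⟨i, rfl⟩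
    · exact absurd hx (cat_spine_deg_ne_one hn i)
    · exact ⟨σ.symm i, by simp⟩

lemma catBD_T : (catBD G σ hn).T = catGraph n := rfl
lemma catBD_δ (v : V) : (catBD G σ hn).δ v = (σ v, 1) := rfl

/-- Side of a spine edge, in the forward direction. -/
lemma side_spine (k : ℕ) (hk : k + 1 < n) :
    (catBD G σ hn).side ((⟨k, by omega⟩ : Fin n), 0) ((⟨k + 1, hk⟩ : Fin n), 0)
      = {v | (σ v : ℕ) ≤ k} := by
  ext v
  show ((catGraph n).deleteEdges {spineEdge n k hk}).Reachable (σ v, 1)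
    ((⟨k, by omega⟩ : Fin n), 0) ↔ (σ v : ℕ) ≤ k
  constructor
  · intro h
    have := reach_invariant (fun z => (z.1 : ℕ) ≤ k) (spine_invariant hk {spineEdge n k hk} rfl) h
    simpa using this
  · intro hle
    have hleaf : ((catGraph n).deleteEdges {spineEdge n k hk}).Adj (σ v, 1) (σ v, 0) := by
      rw [deleteEdges_adj]
      refine ⟨(cat_adj_ls _ _).2 rfl, ?_⟩
      rw [Set.mem_singleton_iff, sym2_pair_eq hk]
      rintro (⟨-, hc, -⟩ | ⟨-, hc, -⟩) <;> exact absurd hc (by decide)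
    refine hleaf.reachable.trans ?_
    have hch := chain_reach ((catGraph n).deleteEdges {spineEdge n k hk})
      (k - (σ v : ℕ)) (σ v : ℕ) (by omega) ?_
    · have h1 : ((⟨(σ v : ℕ), by omega⟩ : Fin n), (0 : Fin 2)) = (σ v, 0) := by
        rw [Prod.mk.injEq]; exact ⟨Fin.ext rfl, rfl⟩
      have h2 : ((⟨(σ v : ℕ) + (k - (σ v : ℕ)), by omega⟩ : Fin n), (0 : Fin 2))
          = ((⟨k, by omega⟩ : Fin n), 0) := by
        rw [Prod.mk.injEq]
        exact ⟨Fin.ext (show (σ v : ℕ) + (k - (σ v : ℕ)) = k by omega), rfl⟩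
      rw [h1, h2] at hch
      exact hch
    · intro m hm hm'
      rw [deleteEdges_adj]
      refine ⟨(cat_adj_ss _ _).2 (Or.inl (by simp)), ?_⟩
      rw [Set.mem_singleton_iff, sym2_pair_eq hk]
      rintro (⟨h1, -, h2, -⟩ | ⟨h1, -, h2, -⟩) <;> simp at h1 h2 <;> omega

/-- Side of a spine edge, in the backward direction. -/
lemma side_spine' (k : ℕ) (hk : k + 1 < n) :
    (catBD G σ hn).side ((⟨k + 1, hk⟩ : Fin n), 0) ((⟨k, by omega⟩ : Fin n), 0)
      = {v | (σ v : ℕ) ≤ k}ᶜ := by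
  ext v
  set E : Set (Sym2 (Fin n × Fin 2)) :=
    {s(((⟨k + 1, hk⟩ : Fin n), (0 : Fin 2)), ((⟨k, by omega⟩ : Fin n), 0))} with hE
  have hsmem : spineEdge n k hk ∈ E := by
    rw [hE, Set.mem_singleton_iff]
    exact Sym2.eq_swap.symm
  have hnm : ∀ {x y : Fin n × Fin 2}, s(x, y) ≠ spineEdge n k hk → s(x, y) ∉ E := by
    intro x y hne hc
    rw [hE, Set.mem_singleton_iff] at hc
    exact hne (hc.trans Sym2.eq_swap)
  show ((catGraph n).deleteEdges E).Reachable (σ v, 1) ((⟨k + 1, hk⟩ : Fin n), 0) ↔ _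
  constructor
  · intro h
    have := reach_invariant (fun z => (z.1 : ℕ) ≤ k) (spine_invariant hk E hsmem) h
    simp only [Set.mem_compl_iff, Set.mem_setOf_eq]
    intro hle
    have h2 := this.1 hle
    simp at h2
  · intro hle
    simp only [Set.mem_compl_iff, Set.mem_setOf_eq] at hle
    have hleaf : ((catGraph n).deleteEdges E).Adj (σ v, 1) (σ v, 0) := by
      rw [deleteEdges_adj]
      refine ⟨(cat_adj_ls _ _).2 rfl, hnm ?_⟩
      rw [Ne, sym2_pair_eq hk]
      rintro (⟨-, hc, -⟩ | ⟨-, hc, -⟩) <;> exact absurd hc (by decide)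
    refine hleaf.reachable.trans ?_
    have hch := chain_reach ((catGraph n).deleteEdges E)
      ((σ v : ℕ) - (k + 1)) (k + 1) (by have := (σ v).isLt; omega) ?_
    · have h1 : ((⟨k + 1, by omega⟩ : Fin n), (0 : Fin 2)) = ((⟨k + 1, hk⟩ : Fin n), 0) := rfl
      have h2 : ((⟨k + 1 + ((σ v : ℕ) - (k + 1)), by omega⟩ : Fin n), (0 : Fin 2))
          = (σ v, 0) := by
        rw [Prod.mk.injEq]
        exact ⟨Fin.ext (show k + 1 + ((σ v : ℕ) - (k + 1)) = (σ v : ℕ) by omega), rfl⟩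
      rw [h1, h2] at hch
      exact hch.symm
    · intro m hm hm'
      rw [deleteEdges_adj]
      refine ⟨(cat_adj_ss _ _).2 (Or.inl (by simp)), hnm ?_⟩
      rw [Ne, sym2_pair_eq hk]
      rintro (⟨h1, -, h2, -⟩ | ⟨h1, -, h2, -⟩) <;> simp at h1 h2 <;> omega

/-- Side of a leaf edge, leaf side. -/
lemma side_leaf (i : Fin n) :
    (catBD G σ hn).side (i, 1) (i, 0) = {v | σ v = i} := by
  ext v
  set E : Set (Sym2 (Fin n × Fin 2)) := {s(((i : Fin n), (1 : Fin 2)), (i, 0))} with hE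
  have hsmem : s((i, (0 : Fin 2)), (i, 1)) ∈ E := by
    rw [hE, Set.mem_singleton_iff]
    exact Sym2.eq_swap.symm
  show ((catGraph n).deleteEdges E).Reachable (σ v, 1) (i, 1) ↔ _
  constructor
  · intro h
    have := reach_invariant (fun z => z = ((i : Fin n), (1 : Fin 2)))
      (leaf_invariant i E hsmem) h
    have h2 := this.2 rfl
    have := congrArg Prod.fst h2
    exact this
  · intro h
    simp only [Set.mem_setOf_eq] at h
    rw [show (σ v : Fin n) = i from h]
/-- Side of a leaf edge, spine side. -/
lemma side_leaf' (i : Fin n) :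
    (catBD G σ hn).side (i, 0) (i, 1) = {v | σ v = i}ᶜ := by
  ext v
  show ((catGraph n).deleteEdges {s(((i : Fin n), (0 : Fin 2)), (i, 1))}).Reachable
    (σ v, 1) (i, 0) ↔ _
  constructor
  · intro h
    have := reach_invariant (fun z => z = ((i : Fin n), (1 : Fin 2)))
      (leaf_invariant i {s((i, (0 : Fin 2)), (i, 1))} rfl) h
    simp only [Set.mem_compl_iff, Set.mem_setOf_eq]
    intro hc
    have h2 := this.1 (by rw [hc])
    exact absurd (show (0 : Fin 2) = 1 from congrArg Prod.snd h2) (by decide)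
  · intro h
    simp only [Set.mem_compl_iff, Set.mem_setOf_eq] at h
    have hleaf : ((catGraph n).deleteEdges {s(((i : Fin n), (0 : Fin 2)), (i, 1))}).Adj
        (σ v, 1) (σ v, 0) := by
      rw [deleteEdges_adj]
      refine ⟨(cat_adj_ls _ _).2 rfl, ?_⟩
      rw [Set.mem_singleton_iff, Sym2.eq_iff]
      rintro (⟨h1, h2⟩ | ⟨h1, h2⟩)
      · exact absurd (show (1 : Fin 2) = 0 from congrArg Prod.snd h1) (by decide)
      · exact h (congrArg Prod.fst h1)
    refine hleaf.reachable.trans ?_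
    have hadj : ∀ m (hm : m + 1 < n),
        ((catGraph n).deleteEdges {s(((i : Fin n), (0 : Fin 2)), (i, 1))}).Adj
          (⟨m, by omega⟩, 0) (⟨m + 1, hm⟩, 0) := by
      intro m hm
      rw [deleteEdges_adj]
      refine ⟨(cat_adj_ss _ _).2 (Or.inl (by simp)), ?_⟩
      rw [Set.mem_singleton_iff, Sym2.eq_iff]
      rintro (⟨h1, h2⟩ | ⟨h1, h2⟩)
      · exact absurd (show (0 : Fin 2) = 1 from congrArg Prod.snd h2) (by decide)
      · exact absurd (show (0 : Fin 2) = 1 from congrArg Prod.snd h1) (by decide)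
    rcases le_or_gt (σ v : ℕ) (i : ℕ) with hle | hlt
    · have hch := chain_reach ((catGraph n).deleteEdges {s(((i : Fin n), (0 : Fin 2)), (i, 1))})
        ((i : ℕ) - (σ v : ℕ)) (σ v : ℕ) (by have := i.isLt; omega)
        (fun m hm hm' => hadj m (by have := i.isLt; omega))
      have h1 : ((⟨(σ v : ℕ), by omega⟩ : Fin n), (0 : Fin 2)) = (σ v, 0) := by
        rw [Prod.mk.injEq]; exact ⟨Fin.ext rfl, rfl⟩
      have h2 : ((⟨(σ v : ℕ) + ((i : ℕ) - (σ v : ℕ)), by have := i.isLt; omega⟩ : Fin n),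
          (0 : Fin 2)) = (i, 0) := by
        rw [Prod.mk.injEq]
        exact ⟨Fin.ext (show (σ v : ℕ) + ((i : ℕ) - (σ v : ℕ)) = (i : ℕ) by omega), rfl⟩
      rw [h1, h2] at hch
      exact hch
    · have hch := chain_reach ((catGraph n).deleteEdges {s(((i : Fin n), (0 : Fin 2)), (i, 1))})
        ((σ v : ℕ) - (i : ℕ)) (i : ℕ) (by have := (σ v).isLt; omega)
        (fun m hm hm' => hadj m (by have := (σ v).isLt; omega))
      have h1 : ((⟨(i : ℕ), by omega⟩ : Fin n), (0 : Fin 2)) = (i, 0) := by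
        rw [Prod.mk.injEq]; exact ⟨Fin.ext rfl, rfl⟩
      have h2 : ((⟨(i : ℕ) + ((σ v : ℕ) - (i : ℕ)), by have := (σ v).isLt; omega⟩ : Fin n),
          (0 : Fin 2)) = (σ v, 0) := by
        rw [Prod.mk.injEq]
        exact ⟨Fin.ext (show (i : ℕ) + ((σ v : ℕ) - (i : ℕ)) = (σ v : ℕ) by omega), rfl⟩
      rw [h1, h2] at hch
      exact hch.symm

lemma side_spine_fin (i j : Fin n) (hij : (j : ℕ) = (i : ℕ) + 1) :
    (catBD G σ hn).side (i, 0) (j, 0) = {v : V | (σ v : ℕ) ≤ (i : ℕ)} := by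
  have hk : (i : ℕ) + 1 < n := hij ▸ j.isLt
  have hj : j = ⟨(i : ℕ) + 1, hk⟩ := Fin.ext hij
  rw [hj]
  exact side_spine G σ hn (i : ℕ) hk

lemma side_spine'_fin (i j : Fin n) (hij : (i : ℕ) = (j : ℕ) + 1) :
    (catBD G σ hn).side (i, 0) (j, 0) = {v : V | (σ v : ℕ) ≤ (j : ℕ)}ᶜ := by
  have hk : (j : ℕ) + 1 < n := hij ▸ i.isLt
  have hi : i = ⟨(j : ℕ) + 1, hk⟩ := Fin.ext hij
  rw [hi]
  exact side_spine' G σ hn (j : ℕ) hk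

end BD

section Order
variable {V : Type*} [Fintype V]

/-- There is an enumeration of a finite type sorted by any given key. -/
lemma order_exists (key : V → ℕ) :
    ∃ σ : V ≃ Fin (Fintype.card V), ∀ v w, key v < key w → (σ v : ℕ) < (σ w : ℕ) := by
  classical
  let ρ : V ≃ Fin (Fintype.card V) := Fintype.equivFin V
  let f : V → ℕ ×ₗ ℕ := fun v => toLex (key v, (ρ v : ℕ))
  have hinj : Function.Injective f := by
    intro v w h
    have h2 := congrArg (fun z => (ofLex z).2) h
    simp only [f] at h2
    exact ρ.injective (Fin.ext h2)
  letI : LinearOrder V := LinearOrder.lift' f hinj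
  have hlt : ∀ v w : V, key v < key w → v < w := by
    intro v w h
    rw [lt_iff_le_not_ge]
    constructor
    · show f v ≤ f w
      exact le_of_lt (Prod.Lex.left _ _ h)
    · intro hc
      have hc' : f w ≤ f v := hc
      exact absurd (Prod.Lex.left (ρ v : ℕ) (ρ w : ℕ) h) (not_lt.2 hc')
  let m := (Finset.univ : Finset V).orderIsoOfFin Finset.card_univ
  let σ : V ≃ Fin (Fintype.card V) :=
    ((m.toEquiv.trans (Equiv.subtypeUnivEquiv (fun x => Finset.mem_univ x)))).symm
  refine ⟨σ, fun v w h => ?_⟩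
  have hvw : v < w := hlt v w h
  have h1 : σ v = m.symm ⟨v, Finset.mem_univ v⟩ := rfl
  have h2 : σ w = m.symm ⟨w, Finset.mem_univ w⟩ := rfl
  have h3 : m.symm ⟨v, Finset.mem_univ v⟩ < m.symm ⟨w, Finset.mem_univ w⟩ := by
    rw [OrderIso.lt_iff_lt]
    exact Subtype.mk_lt_mk.2 hvw
  rw [h1, h2]
  exact h3
end Order

section KeyEx
variable {V : Type*} {G : SimpleGraph V}
  {r : ℕ} (hr : 5 ≤ r) {X : Set V} {a b : Fin r → V}
  (haX : ∀ i, a i ∈ X) (hbX : ∀ i, b i ∈ X)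
  (hne : ∀ i j, a i ≠ b j)
  (hainj : Function.Injective a) (hbinj : Function.Injective b)
  (hPone : ∀ v, v ∉ X → (∀ i, G.Adj v (b i)) → ∀ s t, G.Adj v (a s) → G.Adj v (a t) → s = t)
  (hQone : ∀ v, v ∉ X → (∀ i, G.Adj v (a i)) → ∀ s t, G.Adj v (b s) → G.Adj v (b t) → s = t)
  (hQA : ∀ v, v ∉ X → ¬(∀ i, G.Adj v (b i)) → (∀ i, G.Adj v (a i)))

include hr haX hbX hne hainj hbinj hPone hQone hQA in
lemma key_exists : ∃ key : V → ℕ,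
    (∀ i, key (a i) = 4 * (i : ℕ) + 1) ∧
    (∀ i, key (b i) = 4 * (i : ℕ) + 3) ∧
    (∀ v, v ∉ X → (∀ i, G.Adj v (b i)) → ∀ m, G.Adj v (a m) → key v = 4 * (m : ℕ) + 2) ∧
    (∀ v, v ∉ X → ¬(∀ i, G.Adj v (b i)) → ∀ m, G.Adj v (b m) → key v = 4 * (m : ℕ) + 4) := by
  classical
  refine ⟨fun v =>
    if h : ∃ i, v = a i then 4 * ((Classical.choose h : Fin r) : ℕ) + 1
    else if h : ∃ i, v = b i then 4 * ((Classical.choose h : Fin r) : ℕ) + 3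
    else if hB : ∀ i, G.Adj v (b i) then
      (if h : ∃ m, G.Adj v (a m) then 4 * ((Classical.choose h : Fin r) : ℕ) + 2 else 0)
    else
      (if h : ∃ m, G.Adj v (b m) then 4 * ((Classical.choose h : Fin r) : ℕ) + 4
        else 4 * r + 5), ?_, ?_, ?_, ?_⟩
  · intro i
    beta_reduce
    have hex : ∃ j, a i = a j := ⟨i, rfl⟩
    rw [dif_pos hex]
    have := Classical.choose_spec hex
    rw [← hainj this]
  · intro i
    beta_reduce
    have hne1 : ¬∃ j, b i = a j := by
      rintro ⟨j, hj⟩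
      exact hne j i hj.symm
    have hex : ∃ j, b i = b j := ⟨i, rfl⟩
    rw [dif_neg hne1, dif_pos hex]
    have := Classical.choose_spec hex
    rw [← hbinj this]
  · intro v hv hvB m hm
    beta_reduce
    have hne1 : ¬∃ j, v = a j := by
      rintro ⟨j, rfl⟩
      exact hv (haX j)
    have hne2 : ¬∃ j, v = b j := by
      rintro ⟨j, rfl⟩
      exact hv (hbX j)
    have hex : ∃ m', G.Adj v (a m') := ⟨m, hm⟩
    rw [dif_neg hne1, dif_neg hne2, dif_pos hvB, dif_pos hex]
    have := Classical.choose_spec hex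
    rw [hPone v hv hvB _ m this hm]
  · intro v hv hvB m hm
    beta_reduce
    have hne1 : ¬∃ j, v = a j := by
      rintro ⟨j, rfl⟩
      exact hv (haX j)
    have hne2 : ¬∃ j, v = b j := by
      rintro ⟨j, rfl⟩
      exact hv (hbX j)
    have hex : ∃ m', G.Adj v (b m') := ⟨m, hm⟩
    rw [dif_neg hne1, dif_neg hne2, dif_neg hvB, dif_pos hex]
    have := Classical.choose_spec hex
    rw [hQone v hv (hQA v hv hvB) _ m this hm]
end KeyEx


section Final
variable {V : Type*} {G : SimpleGraph V}
  {r : ℕ} (hr : 5 ≤ r) {X : Set V} {a b : Fin r → V}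
  (haX : ∀ i, a i ∈ X) (hbX : ∀ i, b i ∈ X)
  (hXc : ∀ x ∈ X, (∃ i, x = a i) ∨ (∃ i, x = b i))
  (hne : ∀ i j, a i ≠ b j)
  (hainj : Function.Injective a) (hbinj : Function.Injective b)
  (haa : ∀ i j, G.Adj (a i) (a j) ↔ i ≠ j)
  (hbb : ∀ i j, G.Adj (b i) (b j) ↔ i ≠ j)
  (hab : ∀ i j, G.Adj (a i) (b j) ↔ i = j)
  -- structural facts (proved earlier)
  (hPone : ∀ v, v ∉ X → (∀ i, G.Adj v (b i)) → ∀ s t, G.Adj v (a s) → G.Adj v (a t) → s = t)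
  (hQone : ∀ v, v ∉ X → (∀ i, G.Adj v (a i)) → ∀ s t, G.Adj v (b s) → G.Adj v (b t) → s = t)
  (hQA : ∀ v, v ∉ X → ¬(∀ i, G.Adj v (b i)) → (∀ i, G.Adj v (a i)))
  (hPcl : ∀ v w, v ∉ X → w ∉ X → (∀ i, G.Adj v (b i)) → (∀ i, G.Adj w (b i)) → v ≠ w → G.Adj v w)
  (hQcl : ∀ v w, v ∉ X → w ∉ X → (∀ i, G.Adj v (a i)) → (∀ i, G.Adj w (a i)) → v ≠ w → G.Adj v w)
  (hPQ : ∀ p q, p ∉ X → q ∉ X → (∀ i, G.Adj p (b i)) → ¬(∀ i, G.Adj q (b i)) → ¬G.Adj p q)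
  -- the key function
  (key : V → ℕ)
  (hkA : ∀ i, key (a i) = 4 * (i : ℕ) + 1)
  (hkB : ∀ i, key (b i) = 4 * (i : ℕ) + 3)
  (hkP : ∀ v, v ∉ X → (∀ i, G.Adj v (b i)) → ∀ m, G.Adj v (a m) → key v = 4 * (m : ℕ) + 2)
  (hkQ : ∀ v, v ∉ X → ¬(∀ i, G.Adj v (b i)) → ∀ m, G.Adj v (b m) → key v = 4 * (m : ℕ) + 4)

/-- `C1`: the `B ∪ P` side. -/
def C1 (X : Set V) (G : SimpleGraph V) (b : Fin r → V) (v : V) : Prop :=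
  (∃ i, v = b i) ∨ (v ∉ X ∧ ∀ i, G.Adj v (b i))

/-- `C2`: the `A ∪ Q` side. -/
def C2 (X : Set V) (G : SimpleGraph V) (a b : Fin r → V) (v : V) : Prop :=
  (∃ i, v = a i) ∨ (v ∉ X ∧ ¬(∀ i, G.Adj v (b i)))

include hr haX hbX hXc hne hainj hbinj haa hbb hab hPone hQone hQA hPcl hQcl hPQ hkA hkB hkP hkQ

lemma C_total (v : V) : C1 X G b v ∨ C2 X G a b v := by
  classical
  by_cases hv : v ∈ X
  · rcases hXc v hv with ⟨i, rfl⟩ | ⟨i, rfl⟩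
    · exact Or.inr (Or.inl ⟨i, rfl⟩)
    · exact Or.inl (Or.inl ⟨i, rfl⟩)
  · by_cases hB : ∀ i, G.Adj v (b i)
    · exact Or.inl (Or.inr ⟨hv, hB⟩)
    · exact Or.inr (Or.inr ⟨hv, hB⟩)

lemma C_disj (v : V) : ¬(C1 X G b v ∧ C2 X G a b v) := by
  rintro ⟨hc1, hc2⟩
  rcases hc1 with ⟨i, rfl⟩ | ⟨hv, hB⟩
  · rcases hc2 with ⟨j, hj⟩ | ⟨hv, -⟩
    · exact hne j i hj.symm
    · exact hv (hbX i)
  · rcases hc2 with ⟨j, rfl⟩ | ⟨-, hB'⟩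
    · exact hv (haX j)
    · exact hB' hB

lemma C1_clique {v w : V} (h1 : C1 X G b v) (h2 : C1 X G b w) (hvw : v ≠ w) : G.Adj v w := by
  rcases h1 with ⟨i, rfl⟩ | ⟨hv, hvB⟩
  · rcases h2 with ⟨j, rfl⟩ | ⟨hw, hwB⟩
    · exact (hbb i j).2 (fun h => hvw (congrArg b h))
    · exact (hwB i).symm
  · rcases h2 with ⟨j, rfl⟩ | ⟨hw, hwB⟩
    · exact hvB j
    · exact hPcl v w hv hw hvB hwB hvw

lemma C2_clique {v w : V} (h1 : C2 X G a b v) (h2 : C2 X G a b w) (hvw : v ≠ w) : G.Adj v w := by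
  rcases h1 with ⟨i, rfl⟩ | ⟨hv, hvB⟩
  · rcases h2 with ⟨j, rfl⟩ | ⟨hw, hwB⟩
    · exact (haa i j).2 (fun h => hvw (congrArg a h))
    · exact (hQA w hw hwB i).symm
  · rcases h2 with ⟨j, rfl⟩ | ⟨hw, hwB⟩
    · exact hQA v hv hvB j
    · exact hQcl v w hv hw (hQA v hv hvB) (hQA w hw hwB) hvw

/-- Classification of cross edges in the `C1 → C2` direction within a key-downward-closed
cut: only the `(b i, q)` type survives. -/
lemma claimA {S : Set V} (hdc : ∀ v w, v ∈ S → key w < key v → w ∈ S)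
    {u w : V} (hc1 : C1 X G b u) (hc2 : C2 X G a b w) (hadj : G.Adj u w)
    (hu : u ∈ S) (hw : w ∉ S) :
    ∃ i, u = b i ∧ key u = 4 * (i : ℕ) + 3 ∧ key w = 4 * (i : ℕ) + 4 := by
  rcases hc1 with ⟨i, rfl⟩ | ⟨huX, huB⟩
  · rcases hc2 with ⟨j, rfl⟩ | ⟨hwX, hwB⟩
    · -- (b i, a j) : adjacent means i = j, but then key w < key u
      have hij : j = i := (hab j i).1 hadj.symm
      subst hij
      exact absurd (hdc _ _ hu (by rw [hkA, hkB]; omega)) hw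
    · -- (b i, q)
      have hq : G.Adj w (b i) := hadj.symm
      exact ⟨i, rfl, hkB i, hkQ w hwX hwB i hq⟩
  · rcases hc2 with ⟨j, rfl⟩ | ⟨hwX, hwB⟩
    · -- (p, a j)
      have := hkP u huX huB j hadj
      exact absurd (hdc _ _ hu (by rw [hkA]; omega)) hw
    · exact absurd hadj (hPQ u w huX hwX huB hwB)

/-- Classification of cross edges in the `C2 → C1` direction: only `(a i, b i)` and
`(a i, p)` survive, with controlled keys. -/
lemma claimB {S : Set V} (hdc : ∀ v w, v ∈ S → key w < key v → w ∈ S)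
    {u w : V} (hc2 : C2 X G a b u) (hc1 : C1 X G b w) (hadj : G.Adj u w)
    (hu : u ∈ S) (hw : w ∉ S) :
    ∃ i, u = a i ∧ key u = 4 * (i : ℕ) + 1 ∧
      (key w = 4 * (i : ℕ) + 2 ∨ key w = 4 * (i : ℕ) + 3) := by
  rcases hc2 with ⟨i, rfl⟩ | ⟨huX, huB⟩
  · rcases hc1 with ⟨j, rfl⟩ | ⟨hwX, hwB⟩
    · have hij : i = j := (hab i j).1 hadj
      subst hij
      exact ⟨i, rfl, hkA i, Or.inr (hkB i)⟩
    · have := hkP w hwX hwB i hadj.symm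
      exact ⟨i, rfl, hkA i, Or.inl this⟩
  · rcases hc1 with ⟨j, rfl⟩ | ⟨hwX, hwB⟩
    · -- (q, b j)
      have hq : ¬(∀ i, G.Adj u (b i)) := by
        intro hc
        exact C_disj hr haX hbX hXc hne hainj hbinj haa hbb hab hPone hQone hQA hPcl hQcl hPQ
          key hkA hkB hkP hkQ u ⟨Or.inr ⟨huX, hc⟩, Or.inr ⟨huX, huB⟩⟩
      have := hkQ u huX hq j hadj
      exact absurd (hdc _ _ hu (by rw [hkB]; omega)) hw
    · exact absurd hadj.symm (hPQ w u hwX huX hwB huB)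

lemma pair_contraA {S : Set V} (hdc : ∀ v w, v ∈ S → key w < key v → w ∈ S)
    {p1 p2 : V × V} (h11 : p1.1 ∈ S) (h12 : p1.2 ∈ Sᶜ) (h21 : p2.1 ∈ S) (h22 : p2.2 ∈ Sᶜ)
    (ha1 : G.Adj p1.1 p1.2) (ha2 : G.Adj p2.1 p2.2)
    (hne1 : p1.1 ≠ p2.1) (hne3 : p1.1 ≠ p2.2) (hne4 : p2.1 ≠ p1.2)
    (hna1 : ¬G.Adj p1.1 p2.2) (hna2 : ¬G.Adj p2.1 p1.2)
    (hc1 : C1 X G b p1.1) (hc2 : C1 X G b p2.1) : False := by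
  have hC12 : C2 X G a b p1.2 := by
    rcases C_total hr haX hbX hXc hne hainj hbinj haa hbb hab hPone hQone hQA hPcl hQcl hPQ key hkA hkB hkP hkQ p1.2 with hc | hc
    · exact absurd (C1_clique hr haX hbX hXc hne hainj hbinj haa hbb hab hPone hQone hQA hPcl hQcl hPQ key hkA hkB hkP hkQ hc2 hc hne4) hna2
    · exact hc
  have hC22 : C2 X G a b p2.2 := by
    rcases C_total hr haX hbX hXc hne hainj hbinj haa hbb hab hPone hQone hQA hPcl hQcl hPQ key hkA hkB hkP hkQ p2.2 with hc | hc
    · exact absurd (C1_clique hr haX hbX hXc hne hainj hbinj haa hbb hab hPone hQone hQA hPcl hQcl hPQ key hkA hkB hkP hkQ hc1 hc hne3) hna1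
    · exact hc
  obtain ⟨i1, he1, hk1, hk1'⟩ := claimA hr haX hbX hXc hne hainj hbinj haa hbb hab hPone hQone hQA hPcl hQcl hPQ key hkA hkB hkP hkQ hdc hc1 hC12 ha1 h11 h12
  obtain ⟨i2, he2, hk2, hk2'⟩ := claimA hr haX hbX hXc hne hainj hbinj haa hbb hab hPone hQone hQA hPcl hQcl hPQ key hkA hkB hkP hkQ hdc hc2 hC22 ha2 h21 h22
  have hii : (i1 : ℕ) ≠ (i2 : ℕ) := by
    intro h
    exact hne1 (by rw [he1, he2, Fin.ext h])
  rcases Nat.lt_or_ge (i1 : ℕ) (i2 : ℕ) with h | h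
  · exact h12 (hdc _ _ h21 (by rw [hk2, hk1']; omega))
  · exact h22 (hdc _ _ h11 (by rw [hk1, hk2']; omega))

lemma pair_contraB {S : Set V} (hdc : ∀ v w, v ∈ S → key w < key v → w ∈ S)
    {p1 p2 : V × V} (h11 : p1.1 ∈ S) (h12 : p1.2 ∈ Sᶜ) (h21 : p2.1 ∈ S) (h22 : p2.2 ∈ Sᶜ)
    (ha1 : G.Adj p1.1 p1.2) (ha2 : G.Adj p2.1 p2.2)
    (hne1 : p1.1 ≠ p2.1) (hne3 : p1.1 ≠ p2.2) (hne4 : p2.1 ≠ p1.2)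
    (hna1 : ¬G.Adj p1.1 p2.2) (hna2 : ¬G.Adj p2.1 p1.2)
    (hc1 : C2 X G a b p1.1) (hc2 : C2 X G a b p2.1) : False := by
  have hC12 : C1 X G b p1.2 := by
    rcases C_total hr haX hbX hXc hne hainj hbinj haa hbb hab hPone hQone hQA hPcl hQcl hPQ key hkA hkB hkP hkQ p1.2 with hc | hc
    · exact hc
    · exact absurd (C2_clique hr haX hbX hXc hne hainj hbinj haa hbb hab hPone hQone hQA hPcl hQcl hPQ key hkA hkB hkP hkQ hc2 hc hne4) hna2
  have hC22 : C1 X G b p2.2 := by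
    rcases C_total hr haX hbX hXc hne hainj hbinj haa hbb hab hPone hQone hQA hPcl hQcl hPQ key hkA hkB hkP hkQ p2.2 with hc | hc
    · exact hc
    · exact absurd (C2_clique hr haX hbX hXc hne hainj hbinj haa hbb hab hPone hQone hQA hPcl hQcl hPQ key hkA hkB hkP hkQ hc1 hc hne3) hna1
  obtain ⟨i1, he1, hk1, hk1'⟩ := claimB hr haX hbX hXc hne hainj hbinj haa hbb hab hPone hQone hQA hPcl hQcl hPQ key hkA hkB hkP hkQ hdc hc1 hC12 ha1 h11 h12
  obtain ⟨i2, he2, hk2, hk2'⟩ := claimB hr haX hbX hXc hne hainj hbinj haa hbb hab hPone hQone hQA hPcl hQcl hPQ key hkA hkB hkP hkQ hdc hc2 hC22 ha2 h21 h22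
  have hii : (i1 : ℕ) ≠ (i2 : ℕ) := by
    intro h
    exact hne1 (by rw [he1, he2, Fin.ext h])
  rcases Nat.lt_or_ge (i1 : ℕ) (i2 : ℕ) with h | h
  · refine h12 (hdc _ _ h21 ?_)
    rw [hk2]
    rcases hk1' with hk | hk <;> rw [hk] <;> omega
  · refine h22 (hdc _ _ h11 ?_)
    rw [hk1]
    rcases hk2' with hk | hk <;> rw [hk] <;> omega

/-- The central bound: any induced cut matching across a key-downward-closed cut has
size at most 2. -/
lemma cut_bound {S : Set V} (hdc : ∀ v w, v ∈ S → key w < key v → w ∈ S)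
    (M : Finset (V × V)) (hM : IsInducedCutMatching G S Sᶜ M) : M.card ≤ 2 := by
  classical
  by_contra hcard
  push_neg at hcard
  obtain ⟨p1, p2, p3, hp1, hp2, hp3, h12, h13, h23⟩ := Finset.two_lt_card_iff.mp hcard
  have mem : ∀ p ∈ M, p.1 ∈ S ∧ p.2 ∈ Sᶜ ∧ G.Adj p.1 p.2 := hM.1
  have pairAB : ∀ q1 ∈ M, ∀ q2 ∈ M, q1 ≠ q2 →
      (C1 X G b q1.1 → C1 X G b q2.1 → False) ∧
      (C2 X G a b q1.1 → C2 X G a b q2.1 → False) := by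
    intro q1 hq1 q2 hq2 hne'
    obtain ⟨hne1, -, hne3, hne4, hna1, hna2⟩ := hM.2 q1 hq1 q2 hq2 hne'
    obtain ⟨m11, m12, ma1⟩ := mem q1 hq1
    obtain ⟨m21, m22, ma2⟩ := mem q2 hq2
    exact ⟨fun c1 c2 => pair_contraA hr haX hbX hXc hne hainj hbinj haa hbb hab hPone hQone hQA hPcl hQcl hPQ key hkA hkB hkP hkQ hdc m11 m12 m21 m22 ma1 ma2 hne1 hne3 hne4.symm
        hna1 hna2 c1 c2,
      fun c1 c2 => pair_contraB hr haX hbX hXc hne hainj hbinj haa hbb hab hPone hQone hQA hPcl hQcl hPQ key hkA hkB hkP hkQ hdc m11 m12 m21 m22 ma1 ma2 hne1 hne3 hne4.symm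
        hna1 hna2 c1 c2⟩
  have notC1 : ∀ v, ¬C1 X G b v → C2 X G a b v := by
    intro v h
    rcases C_total hr haX hbX hXc hne hainj hbinj haa hbb hab hPone hQone hQA hPcl hQcl hPQ key hkA hkB hkP hkQ v with hc | hc
    · exact absurd hc h
    · exact hc
  by_cases c1 : C1 X G b p1.1 <;> by_cases c2 : C1 X G b p2.1 <;> by_cases c3 : C1 X G b p3.1
  · exact (pairAB p1 hp1 p2 hp2 h12).1 c1 c2
  · exact (pairAB p1 hp1 p2 hp2 h12).1 c1 c2
  · exact (pairAB p1 hp1 p3 hp3 h13).1 c1 c3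
  · exact (pairAB p2 hp2 p3 hp3 h23).2 (notC1 _ c2) (notC1 _ c3)
  · exact (pairAB p2 hp2 p3 hp3 h23).1 c2 c3
  · exact (pairAB p1 hp1 p3 hp3 h13).2 (notC1 _ c1) (notC1 _ c3)
  · exact (pairAB p1 hp1 p2 hp2 h12).2 (notC1 _ c1) (notC1 _ c2)
  · exact (pairAB p1 hp1 p2 hp2 h12).2 (notC1 _ c1) (notC1 _ c2)

end Final

end Aux

/-- Let `G` be a `(2P₁ + P₂, ⋈)`-free graph and let `X ⊆ V(G)` induce
a `K_r ⊟ K_r` with `r ≥ 5`, where `X` is maximal in the sense that no `X ∪ S` with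
`S ⊆ V(G) ∖ X` induces a `K_{r'} ⊟ K_{r'}` with `r' > r`.  Then `G` has a branch
decomposition of mim-width exactly `2`; in particular `mimw(G) ≤ 2`. -/
theorem twoP1P2_bowtie_free_KboxK_mimw_two {V : Type*} [Finite V] (G : SimpleGraph V)
    (h1 : HFree G (sP1P2graph 2)) (h2 : HFree G bowtieGraph)
    (r : ℕ) (hr : 5 ≤ r) (X : Set V) (hX : Nonempty (G.induce X ≃g KboxK r))
    (hmax : ∀ r' : ℕ, r < r' → ∀ S : Set V, Disjoint S X →
      ¬ Nonempty (G.induce (X ∪ S) ≃g KboxK r')) :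
    (∃ B : BranchDecomp G, B.width = 2) ∧ mimw G ≤ 2 := by
  classical
  obtain ⟨e⟩ := hX
  set a : Fin r → V := fun i => ((e.symm (Sum.inl i) : ↥X) : V) with ha_def
  set b : Fin r → V := fun i => ((e.symm (Sum.inr i) : ↥X) : V) with hb_def
  have haX : ∀ i, a i ∈ X := fun i => (e.symm (Sum.inl i)).2
  have hbX : ∀ i, b i ∈ X := fun i => (e.symm (Sum.inr i)).2
  have keyadj : ∀ u v : Fin r ⊕ Fin r,
      G.Adj ((e.symm u : ↥X) : V) ((e.symm v : ↥X) : V) ↔ (KboxK r).Adj u v := by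
    intro u v
    have h := e.symm.map_rel_iff (a := u) (b := v)
    rw [← h]
    exact Iff.rfl
  have haa : ∀ i j, G.Adj (a i) (a j) ↔ i ≠ j := fun i j => (keyadj _ _).trans (kbox_ll i j)
  have hbb : ∀ i j, G.Adj (b i) (b j) ↔ i ≠ j := fun i j => (keyadj _ _).trans (kbox_rr i j)
  have hab : ∀ i j, G.Adj (a i) (b j) ↔ i = j := fun i j => (keyadj _ _).trans (kbox_lr i j)
  have hne : ∀ i j, a i ≠ b j := by
    intro i j h
    have h2 : e.symm (Sum.inl i) = e.symm (Sum.inr j) := Subtype.ext h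
    have h3 := e.symm.toEquiv.injective h2
    simp at h3
  have hXc : ∀ x ∈ X, (∃ i, x = a i) ∨ (∃ i, x = b i) := by
    intro x hx
    rcases hu : e ⟨x, hx⟩ with i | i
    · left
      refine ⟨i, ?_⟩
      have h3 : e.symm (Sum.inl i) = ⟨x, hx⟩ := by rw [← hu]; exact e.symm_apply_apply _
      rw [ha_def]
      exact (congrArg Subtype.val h3).symm
    · right
      refine ⟨i, ?_⟩
      have h3 : e.symm (Sum.inr i) = ⟨x, hx⟩ := by rw [← hu]; exact e.symm_apply_apply _
      rw [hb_def]
      exact (congrArg Subtype.val h3).symm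
  have hai : Function.Injective a := a_inj h1 h2 hr haX hbX hne haa hbb hab
  have hbi : Function.Injective b := b_inj h1 h2 hr haX hbX hne haa hbb hab
  have hPone : ∀ v, v ∉ X → (∀ i, G.Adj v (b i)) →
      ∀ s t, G.Adj v (a s) → G.Adj v (a t) → s = t :=
    fun v hv hvB => P_one h1 h2 hr haX hbX hne haa hbb hab hv hvB
  have hQone : ∀ v, v ∉ X → (∀ i, G.Adj v (a i)) →
      ∀ s t, G.Adj v (b s) → G.Adj v (b t) → s = t :=
    fun v hv hvA => Q_one h1 h2 hr haX hbX hne haa hbb hab hv hvA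
  have hQA : ∀ v, v ∉ X → ¬(∀ i, G.Adj v (b i)) → (∀ i, G.Adj v (a i)) := by
    intro v hv hB
    rcases classify h1 h2 hr haX hbX hne haa hbb hab hv with ⟨hc, -⟩ | ⟨hc, -⟩
    · exact absurd hc hB
    · exact hc
  have hPcl : ∀ v w, v ∉ X → w ∉ X → (∀ i, G.Adj v (b i)) → (∀ i, G.Adj w (b i)) →
      v ≠ w → G.Adj v w :=
    fun v w hv hw hvB hwB hvw => P_clique h1 h2 hr haX hbX hne haa hbb hab hv hw hvB hwB hvw
  have hQcl : ∀ v w, v ∉ X → w ∉ X → (∀ i, G.Adj v (a i)) → (∀ i, G.Adj w (a i)) →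
      v ≠ w → G.Adj v w :=
    fun v w hv hw hvA hwA hvw => Q_clique h1 h2 hr haX hbX hne haa hbb hab hv hw hvA hwA hvw
  have hPQ : ∀ p q, p ∉ X → q ∉ X → (∀ i, G.Adj p (b i)) → ¬(∀ i, G.Adj q (b i)) →
      ¬G.Adj p q := by
    intro p q hp hq hpB hqB'
    have hqA := hQA q hq hqB'
    by_cases hpa : ∃ m, G.Adj p (a m)
    · obtain ⟨m, hm⟩ := hpa
      exact PA_anti_Q h1 h2 hr haX hbX hne haa hbb hab hp hq hpB hm hqA
    · by_cases hqb : ∃ m, G.Adj q (b m)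
      · obtain ⟨m, hm⟩ := hqb
        exact QB_anti_P h1 h2 hr haX hbX hne haa hbb hab hp hq hqA hm hpB
      · push_neg at hpa hqb
        have hpq : p ≠ q := by rintro rfl; exact hqB' hpB
        exact P0_anti_Q0 hr haX hbX hXc hne hai hbi haa hbb hab hmax hp hq hpq hpB hqA hpa hqb
  obtain ⟨key, hkA, hkB, hkP, hkQ⟩ :=
    key_exists hr haX hbX hne hai hbi hPone hQone hQA
  haveI : Fintype V := Fintype.ofFinite V
  set n := Fintype.card V with hn_def
  have hn : 2 ≤ n := Fintype.one_lt_card_iff.2 ⟨a ⟨0, by omega⟩, b ⟨0, by omega⟩, hne _ _⟩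
  obtain ⟨σ, hσ⟩ := order_exists key
  set B := catBD G σ hn with hB_def
  have hdc : ∀ k : ℕ, ∀ v w : V, v ∈ {v : V | (σ v : ℕ) ≤ k} → key w < key v →
      w ∈ {v : V | (σ v : ℕ) ≤ k} := by
    intro k v w hv hk
    exact le_trans (le_of_lt (hσ w v hk)) hv
  have hcut : ∀ k : ℕ, cutmim G {v : V | (σ v : ℕ) ≤ k} {v : V | (σ v : ℕ) ≤ k}ᶜ ≤ 2 := by
    intro k
    apply cutmim_le
    intro M hM
    exact cut_bound hr haX hbX hXc hne hai hbi haa hbb hab hPone hQone hQA hPcl hQcl hPQ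
      key hkA hkB hkP hkQ (hdc k) M hM
  have hsingL : ∀ i : Fin n, cutmim G {v : V | σ v = i} {v : V | σ v = i}ᶜ ≤ 1 := by
    intro i
    apply cutmim_left_sub
    intro x hx y hy
    exact σ.injective (hx.trans hy.symm)
  have hsingR : ∀ i : Fin n, cutmim G {v : V | σ v = i}ᶜ {v : V | σ v = i} ≤ 1 := by
    intro i
    apply cutmim_right_sub
    intro x hx y hy
    exact σ.injective (hx.trans hy.symm)
  have hub : ∀ x ∈ {m : ℕ | ∃ a' b' : B.L, B.T.Adj a' b' ∧
      m = cutmim G (B.side a' b') (B.side a' b')ᶜ}, x ≤ 2 := by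
    rintro x ⟨a', b', hadj', rfl⟩
    have hadjT : (catGraph n).Adj a' b' := hadj'
    rcases cat_cases a' with ⟨i, rfl⟩ | ⟨i, rfl⟩ <;> rcases cat_cases b' with ⟨j, rfl⟩ | ⟨j, rfl⟩
    · rw [cat_adj_ss] at hadjT
      rcases hadjT with hj | hj
      · rw [show B.side (i, 0) (j, 0) = {v : V | (σ v : ℕ) ≤ (i : ℕ)} from
          side_spine_fin G σ hn i j hj]
        exact hcut _
      · rw [show B.side (i, 0) (j, 0) = {v : V | (σ v : ℕ) ≤ (j : ℕ)}ᶜ from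
          side_spine'_fin G σ hn i j hj, compl_compl, cutmim_swap]
        exact hcut _
    · rw [cat_adj_sl] at hadjT
      subst hadjT
      rw [show B.side (i, 0) (i, 1) = {v : V | σ v = i}ᶜ from side_leaf' G σ hn i,
        compl_compl]
      exact le_trans (hsingR i) (by omega)
    · rw [cat_adj_ls] at hadjT
      subst hadjT
      rw [show B.side (i, 1) (i, 0) = {v : V | σ v = i} from side_leaf G σ hn i]
      exact le_trans (hsingL i) (by omega)
    · exact absurd hadjT (cat_adj_ll i j)
  -- the cut of value exactly 2
  obtain ⟨I0, hI0⟩ : ∃ i : Fin r, (i : ℕ) = 0 := ⟨⟨0, by omega⟩, rfl⟩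
  obtain ⟨I1, hI1⟩ : ∃ i : Fin r, (i : ℕ) = 1 := ⟨⟨1, by omega⟩, rfl⟩
  have hi01 : I0 ≠ I1 := by
    intro hc
    rw [hc, hI1] at hI0
    omega
  have hklt1 : key (a I0) < key (b I0) := by
    rw [hkA, hkB]
    omega
  have hklt2 : key (b I0) < key (a I1) := by
    rw [hkA, hkB, hI0, hI1]
    omega
  have hklt3 : key (b I0) < key (b I1) := by
    rw [hkB, hkB, hI0, hI1]
    omega
  set k0 : ℕ := (σ (b I0) : ℕ) with hk0_def
  have hk0 : k0 + 1 < n :=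
    lt_of_le_of_lt (Nat.succ_le_of_lt (hσ _ _ hklt2)) (σ (a I1)).isLt
  have hedge : B.T.Adj ((⟨k0, by omega⟩ : Fin n), 0) ((⟨k0 + 1, hk0⟩ : Fin n), 0) := by
    show (catGraph n).Adj _ _
    rw [cat_adj_ss]
    exact Or.inl rfl
  have hside : B.side ((⟨k0, by omega⟩ : Fin n), 0) ((⟨k0 + 1, hk0⟩ : Fin n), 0)
      = {v : V | (σ v : ℕ) ≤ k0} := side_spine G σ hn k0 hk0
  have hS1 : a I0 ∈ {v : V | (σ v : ℕ) ≤ k0} := le_of_lt (hσ _ _ hklt1)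
  have hS2 : b I0 ∈ {v : V | (σ v : ℕ) ≤ k0} := by
    rw [hk0_def]
    show (σ (b I0) : ℕ) ≤ (σ (b I0) : ℕ)
    exact Nat.le_refl _
  have hS3 : a I1 ∈ {v : V | (σ v : ℕ) ≤ k0}ᶜ := not_le.2 (hσ _ _ hklt2)
  have hS4 : b I1 ∈ {v : V | (σ v : ℕ) ≤ k0}ᶜ := not_le.2 (hσ _ _ hklt3)
  set M0 : Finset (V × V) := {(a I0, a I1), (b I0, b I1)} with hM0_def
  have hM0ne : ((a I0, a I1) : V × V) ≠ (b I0, b I1) := by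
    intro hc
    exact hne _ _ (congrArg Prod.fst hc)
  have hM0card : M0.card = 2 := by
    rw [hM0_def, Finset.card_insert_of_notMem (by simpa using hM0ne), Finset.card_singleton]
  have hM0icm : IsInducedCutMatching G {v : V | (σ v : ℕ) ≤ k0}
      {v : V | (σ v : ℕ) ≤ k0}ᶜ M0 := by
    constructor
    · intro p hp
      rw [hM0_def] at hp
      simp only [Finset.mem_insert, Finset.mem_singleton] at hp
      rcases hp with rfl | rfl
      · exact ⟨hS1, hS3, (haa _ _).2 hi01⟩
      · exact ⟨hS2, hS4, (hbb _ _).2 hi01⟩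
    · intro p hp q hq hpq
      rw [hM0_def] at hp hq
      simp only [Finset.mem_insert, Finset.mem_singleton] at hp hq
      rcases hp with rfl | rfl <;> rcases hq with rfl | rfl
      · exact absurd rfl hpq
      · exact ⟨hne _ _, hne _ _, hne _ _, hne _ _,
          fun h => hi01 ((hab _ _).1 h),
          fun h => hi01 (((hab _ _).1 h.symm).symm)⟩
      · exact ⟨(hne _ _).symm, (hne _ _).symm, fun h => hne _ _ h.symm,
          fun h => hne _ _ h.symm,
          fun h => hi01 (((hab _ _).1 h.symm).symm),
          fun h => hi01 ((hab _ _).1 h)⟩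
      · exact absurd rfl hpq
  have hval : cutmim G {v : V | (σ v : ℕ) ≤ k0} {v : V | (σ v : ℕ) ≤ k0}ᶜ = 2 := by
    refine le_antisymm (hcut k0) ?_
    have := le_cutmim hM0icm
    rwa [hM0card] at this
  have hmem2 : (2 : ℕ) ∈ {m : ℕ | ∃ a' b' : B.L, B.T.Adj a' b' ∧
      m = cutmim G (B.side a' b') (B.side a' b')ᶜ} := by
    refine ⟨((⟨k0, by omega⟩ : Fin n), 0), ((⟨k0 + 1, hk0⟩ : Fin n), 0), hedge, ?_⟩
    rw [hside, hval]
  have hwidth : B.width = 2 := by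
    refine le_antisymm (csSup_le ⟨2, hmem2⟩ hub) (le_csSup ⟨2, hub⟩ hmem2)
  exact ⟨⟨B, hwidth⟩, Nat.sInf_le ⟨B, hwidth⟩⟩
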